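/- arXiv:1911.12972 — 2 statements merged into one kernel-verified Lean document; each statement's English description precedes it below -/
import Mathlib

section
/- Let g : [0,∞) → ℝ be continuous with |g(t)| ≤ C·e^(A t) for all t ≥ 0, for some constants C > 0 and A > 0. Let (α_n) be a sequence with 0 < α_n ≤ 1/n for all n. Then for every b > 0, U_n^[α_n](g; x) → g(x) uniformly for x in [0, b] as n → ∞ (where U_n^[α_n](g; x) is well defined for all n > A). -/
open MeasureTheory Filter

noncomputable section

/-- The Szász basis function `e^(-nu) (nu)^i / i!`. -/
def szaszBasis (n i : ℕ) (u : ℝ) : ℝ :=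
  Real.exp (-(n : ℝ) * u) * ((n : ℝ) * u) ^ i / (Nat.factorial i : ℝ)

/-- The rising factorial `x^(i,-α) = ∏_{j=0}^{i-1} (x + jα)` with increment `α`. -/
def risingFac (x α : ℝ) (i : ℕ) : ℝ :=
  ∏ j ∈ Finset.range i, (x + (j : ℝ) * α)

/-- The Durrmeyer modification of the generalized Szász-Mirakjan operators:
`U_n^[α](f; x) = n Σ_i (1+nα)^(−x/α) (α+1/n)^(−i) x^(i,−α)/i! ∫_0^∞ e^(−nu)(nu)^i/i! f(u) du`. -/
def U (n : ℕ) (α : ℝ) (f : ℝ → ℝ) (x : ℝ) : ℝ :=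
  (n : ℝ) * ∑' i : ℕ,
    (1 + (n : ℝ) * α) ^ (-x / α) * (α + 1 / (n : ℝ)) ^ (-(i : ℤ)) *
      (risingFac x α i / (Nat.factorial i : ℝ)) *
      ∫ u in Set.Ioi (0 : ℝ), szaszBasis n i u * f u

/-- The `m`-th central moment `Θ_{n,m}^[α](x) = U_n^[α]((t−x)^m; x)`. -/
def theta (n : ℕ) (α : ℝ) (m : ℕ) (x : ℝ) : ℝ :=
  U n α (fun t => (t - x) ^ m) x

end

namespace Stmt9Aux

open MeasureTheory Real Set Filter
open scoped ENNReal NNReal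

lemma asc_nonneg {s : ℝ} (hs : 0 ≤ s) (i : ℕ) :
    0 ≤ ∏ j ∈ Finset.range i, (s + (j : ℝ)) :=
  Finset.prod_nonneg fun j _ => by positivity

lemma asc_succ (s : ℝ) (i : ℕ) :
    ∏ j ∈ Finset.range (i + 1), (s + (j : ℝ)) =
      s * ∏ j ∈ Finset.range i, ((s + 1) + (j : ℝ)) := by
  rw [Finset.prod_range_succ']
  simp only [Nat.cast_zero, add_zero, Nat.cast_add, Nat.cast_one]
  rw [mul_comm]
  congr 1
  exact Finset.prod_congr rfl fun j _ => by ring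

lemma summable_ascSeries {s z : ℝ} (hs : 0 ≤ s) (hz0 : 0 ≤ z) (hz1 : z < 1) :
    Summable (fun i : ℕ =>
      (∏ j ∈ Finset.range i, (s + (j : ℝ))) / (Nat.factorial i : ℝ) * z ^ i) := by
  set f : ℕ → ℝ := fun i =>
    (∏ j ∈ Finset.range i, (s + (j : ℝ))) / (Nat.factorial i : ℝ) * z ^ i with hf
  have hfnn : ∀ i, 0 ≤ f i := fun i => by
    apply mul_nonneg (div_nonneg (asc_nonneg hs i) (by positivity)) (by positivity)
  have hrec : ∀ i : ℕ, f (i + 1) = f i * ((s + i) * z / (i + 1)) := by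
    intro i
    simp only [hf, Finset.prod_range_succ, Nat.factorial_succ, pow_succ]
    push_cast
    field_simp
  apply summable_of_ratio_norm_eventually_le (r := (1 + z) / 2) (by linarith)
  filter_upwards [Filter.eventually_ge_atTop (Nat.ceil (2 * s / (1 - z)))] with i hi
  have hic : (2 * s / (1 - z) : ℝ) ≤ i :=
    le_trans (Nat.le_ceil _) (by exact_mod_cast hi)
  have h1z : (0:ℝ) < 1 - z := by linarith
  have hsi : 2 * s ≤ (1 - z) * i := by
    rw [div_le_iff₀ h1z] at hic; linarith [hic]
  rw [Real.norm_eq_abs, Real.norm_eq_abs, abs_of_nonneg (hfnn _), abs_of_nonneg (hfnn _),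
    hrec i, mul_comm ((1 + z) / 2) (f i)]
  apply mul_le_mul_of_nonneg_left _ (hfnn i)
  rw [div_le_iff₀ (by positivity)]
  have hzi : z * (i:ℝ) ≤ (i:ℝ) := by
    nlinarith [Nat.cast_nonneg (α := ℝ) i]
  nlinarith [Nat.cast_nonneg (α := ℝ) i]

lemma Gamma_asc {s : ℝ} (hs : 0 < s) (i : ℕ) :
    Real.Gamma (s + i) = (∏ j ∈ Finset.range i, (s + (j : ℝ))) * Real.Gamma s := by
  induction i with
  | zero => simp
  | succ i ih =>
    have h1 : s + (i + 1 : ℕ) = (s + i) + 1 := by push_cast; ring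
    rw [h1, Real.Gamma_add_one (by positivity), ih, Finset.prod_range_succ]
    ring

lemma integral_rpow_mul_exp_neg {q β : ℝ} (hq : -1 < q) (hβ : 0 < β) :
    ∫ u in Ioi (0:ℝ), u ^ q * Real.exp (-β * u) = β ^ (-(q+1)) * Real.Gamma (q+1) := by
  have h := integral_rpow_mul_exp_neg_mul_rpow (p := 1) one_pos hq hβ
  simp only [Real.rpow_one, div_one, one_div, neg_div] at h
  simpa using h

lemma integrableOn_rpow_mul_exp_neg {q β : ℝ} (hq : -1 < q) (hβ : 0 < β) :
    IntegrableOn (fun u : ℝ => u ^ q * Real.exp (-β * u)) (Ioi 0) := by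
  have h := Real.GammaIntegral_convergent (show 0 < q + 1 by linarith)
  have h' : IntegrableOn (fun x : ℝ => Real.exp (-(β * x)) * (β * x) ^ q) (Ioi 0) := by
    have := (integrableOn_Ioi_comp_mul_left_iff
      (fun x : ℝ => Real.exp (-x) * x ^ (q + 1 - 1)) 0 hβ).mpr (by simpa using h)
    simpa using this
  refine MeasureTheory.IntegrableOn.congr_fun (h'.const_mul (β ^ (-q)))
    (fun x hx => ?_) measurableSet_Ioi
  have hx0 : (0:ℝ) < x := hx
  rw [Real.mul_rpow hβ.le hx0.le]
  rw [show β ^ (-q) * (Real.exp (-(β * x)) * (β ^ q * x ^ q))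
      = (β ^ (-q) * β ^ q) * (x ^ q * Real.exp (-(β * x))) by ring,
    ← Real.rpow_add hβ]
  simp

lemma integral_pow_mul_exp_neg {k : ℕ} {β : ℝ} (hβ : 0 < β) :
    ∫ u in Ioi (0:ℝ), u ^ k * Real.exp (-β * u) = (Nat.factorial k : ℝ) / β ^ (k+1) := by
  have h : ∫ u in Ioi (0:ℝ), u ^ (k:ℝ) * Real.exp (-β * u)
      = β ^ (-((k:ℝ)+1)) * Real.Gamma ((k:ℝ)+1) :=
    integral_rpow_mul_exp_neg (lt_of_lt_of_le (by norm_num) (Nat.cast_nonneg k)) hβ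
  simp only [Real.rpow_natCast] at h
  rw [h, Real.Gamma_nat_eq_factorial,
    show -((k:ℝ)+1) = -(((k+1:ℕ):ℝ)) by push_cast; ring,
    Real.rpow_neg hβ.le, Real.rpow_natCast]
  field_simp

lemma integrableOn_pow_mul_exp_neg {k : ℕ} {β : ℝ} (hβ : 0 < β) :
    IntegrableOn (fun u : ℝ => u ^ k * Real.exp (-β * u)) (Ioi 0) := by
  have h := integrableOn_rpow_mul_exp_neg
    (q := (k:ℝ)) (lt_of_lt_of_le (by norm_num) (Nat.cast_nonneg k)) hβ
  simpa only [Real.rpow_natCast] using h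

lemma hasSum_ascSeries {s z : ℝ} (hs : 0 ≤ s) (hz0 : 0 ≤ z) (hz1 : z < 1) :
    HasSum (fun i : ℕ =>
      (∏ j ∈ Finset.range i, (s + (j : ℝ))) / (Nat.factorial i : ℝ) * z ^ i)
      ((1 - z) ^ (-s)) := by
  set f : ℕ → ℝ := fun i =>
    (∏ j ∈ Finset.range i, (s + (j : ℝ))) / (Nat.factorial i : ℝ) * z ^ i with hfdef
  rcases eq_or_lt_of_le hs with hs0 | hs
  · have hfi : f = fun i : ℕ => if i = 0 then (1:ℝ) else 0 := by
      funext i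
      cases i with
      | zero => simp [hfdef]
      | succ j =>
        have h0 : (∏ k ∈ Finset.range (j+1), (s + (k : ℝ))) = 0 :=
          Finset.prod_eq_zero (Finset.mem_range.mpr (Nat.succ_pos j)) (by simp [← hs0])
        simp [hfdef, h0]
    rw [hfi, ← hs0, neg_zero, Real.rpow_zero]
    exact hasSum_ite_eq 0 1
  · have h1z : (0:ℝ) < 1 - z := by linarith
    have hG : 0 < Real.Gamma s := Real.Gamma_pos_of_pos hs
    have hsum : Summable f := summable_ascSeries hs.le hz0 hz1
    have hfnn : ∀ i, 0 ≤ f i := fun i =>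
      mul_nonneg (div_nonneg (asc_nonneg hs.le i) (by positivity)) (by positivity)
    set F : ℕ → ℝ → ℝ := fun i t =>
      z ^ i / (Nat.factorial i : ℝ) * (t ^ (s - 1 + i) * Real.exp (-t)) with hFdef
    have hq : ∀ i : ℕ, (-1:ℝ) < s - 1 + i := fun i => by
      have := Nat.cast_nonneg (α := ℝ) i; linarith
    have hFnn : ∀ i : ℕ, ∀ t ∈ Ioi (0:ℝ), 0 ≤ F i t := by
      intro i t ht
      have ht0 : (0:ℝ) < t := ht
      have : (0:ℝ) ≤ t ^ (s - 1 + i) := Real.rpow_nonneg ht0.le _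
      simp only [hFdef]
      positivity
    have hFint : ∀ i : ℕ, IntegrableOn (F i) (Ioi 0) := by
      intro i
      have h := integrableOn_rpow_mul_exp_neg (hq i) one_pos
      simp only [neg_one_mul] at h
      exact h.const_mul _
    have hFval : ∀ i : ℕ, ∫ t in Ioi (0:ℝ), F i t = f i * Real.Gamma s := by
      intro i
      simp only [hFdef]
      rw [MeasureTheory.integral_const_mul]
      have h := integral_rpow_mul_exp_neg (hq i) one_pos
      simp only [neg_one_mul] at h
      rw [h, show s - 1 + (i:ℝ) + 1 = s + i by ring, Real.one_rpow, one_mul,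
        Gamma_asc hs, hfdef]
      ring
    have hptw : EqOn (fun t => ∑' i, F i t)
        (fun t => t ^ (s - 1) * Real.exp (-(1 - z) * t)) (Ioi (0:ℝ)) := by
      intro t ht
      have ht0 : (0:ℝ) < t := ht
      have hF' : ∀ i : ℕ, F i t
          = (t ^ (s-1) * Real.exp (-t)) * ((z*t) ^ i / (Nat.factorial i : ℝ)) := by
        intro i
        simp only [hFdef]
        rw [Real.rpow_add ht0, Real.rpow_natCast, mul_pow]
        ring
      simp only
      rw [tsum_congr hF', tsum_mul_left]
      have he : ∑' i : ℕ, (z*t) ^ i / (Nat.factorial i : ℝ) = Real.exp (z*t) := by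
        rw [Real.exp_eq_exp_ℝ, NormedSpace.exp_eq_tsum_div]
      rw [he, mul_assoc, ← Real.exp_add]
      congr 2
      ring
    have hswap : ∫ t in Ioi (0:ℝ), (∑' i, F i t) = ∑' i, ∫ t in Ioi (0:ℝ), F i t := by
      apply MeasureTheory.integral_tsum
      · exact fun i => (hFint i).aestronglyMeasurable
      · have hne : ∀ i : ℕ, ∫⁻ t in Ioi (0:ℝ), ‖F i t‖ₑ
            = ENNReal.ofReal (f i * Real.Gamma s) := by
          intro i
          have e1 : ∫⁻ t in Ioi (0:ℝ), ‖F i t‖ₑ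
              = ∫⁻ t in Ioi (0:ℝ), ENNReal.ofReal (F i t) := by
            apply lintegral_congr_ae
            filter_upwards [ae_restrict_mem measurableSet_Ioi] with t ht
            exact Real.enorm_eq_ofReal (hFnn i t ht)
          rw [e1, ← MeasureTheory.ofReal_integral_eq_lintegral_ofReal (hFint i) ?_, hFval i]
          filter_upwards [ae_restrict_mem measurableSet_Ioi] with t ht using hFnn i t ht
        rw [tsum_congr hne,
          ← ENNReal.ofReal_tsum_of_nonneg (fun i => mul_nonneg (hfnn i) hG.le)
            (hsum.mul_right _)]
        exact ENNReal.ofReal_ne_top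
    have h1 : ∫ t in Ioi (0:ℝ), t ^ (s-1) * Real.exp (-(1-z) * t)
        = (1-z) ^ (-s) * Real.Gamma s := by
      have h := integral_rpow_mul_exp_neg (q := s - 1) (by linarith) h1z
      rw [h, show s - 1 + 1 = s by ring]
    have hkey : (∑' i, f i) * Real.Gamma s = (1 - z) ^ (-s) * Real.Gamma s := by
      rw [← tsum_mul_right]
      rw [← tsum_congr hFval, ← hswap,
        MeasureTheory.setIntegral_congr_fun measurableSet_Ioi hptw, h1]
    exact hsum.hasSum_iff.mpr (mul_right_cancel₀ hG.ne' hkey)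

lemma hasSum_ascSeries_id {s z : ℝ} (hs : 0 ≤ s) (hz0 : 0 ≤ z) (hz1 : z < 1) :
    HasSum (fun i : ℕ =>
      (∏ j ∈ Finset.range i, (s + (j : ℝ))) / (Nat.factorial i : ℝ) * z ^ i * (i : ℝ))
      (s * z * (1 - z) ^ (-(s+1))) := by
  set f : ℕ → ℝ := fun i =>
    (∏ j ∈ Finset.range i, (s + (j : ℝ))) / (Nat.factorial i : ℝ) * z ^ i * (i : ℝ) with hfdef
  have h := (hasSum_ascSeries (s := s+1) (by linarith) hz0 hz1).mul_left (s * z)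
  have hshift : (fun i : ℕ => f (i + 1)) =
      (fun i : ℕ => s * z *
        ((∏ j ∈ Finset.range i, ((s+1) + (j : ℝ))) / (Nat.factorial i : ℝ) * z ^ i)) := by
    funext i
    simp only [hfdef, asc_succ, Nat.factorial_succ, pow_succ]
    push_cast
    have hi : ((i:ℝ) + 1) ≠ 0 := by positivity
    field_simp
  have h2 : HasSum (fun i : ℕ => f (i + 1)) (s * z * (1-z) ^ (-(s+1))) := by
    rw [hshift]; exact h
  have h3 := (hasSum_nat_add_iff (f := f) 1).mp h2
  simpa [hfdef] using h3

lemma hasSum_ascSeries_id2 {s z : ℝ} (hs : 0 ≤ s) (hz0 : 0 ≤ z) (hz1 : z < 1) :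
    HasSum (fun i : ℕ =>
      (∏ j ∈ Finset.range i, (s + (j : ℝ))) / (Nat.factorial i : ℝ) * z ^ i *
        ((i : ℝ) * ((i : ℝ) - 1)))
      (s * (s+1) * z ^ 2 * (1 - z) ^ (-(s+2))) := by
  set f : ℕ → ℝ := fun i =>
    (∏ j ∈ Finset.range i, (s + (j : ℝ))) / (Nat.factorial i : ℝ) * z ^ i *
      ((i : ℝ) * ((i : ℝ) - 1)) with hfdef
  have h := (hasSum_ascSeries (s := s+2) (by linarith) hz0 hz1).mul_left (s * (s+1) * z^2)
  have hshift : (fun i : ℕ => f (i + 2)) =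
      (fun i : ℕ => s * (s+1) * z^2 *
        ((∏ j ∈ Finset.range i, ((s+2) + (j : ℝ))) / (Nat.factorial i : ℝ) * z ^ i)) := by
    funext i
    have e1 : ∏ j ∈ Finset.range (i+2), (s + (j:ℝ))
        = s * (s+1) * ∏ j ∈ Finset.range i, ((s+2) + (j:ℝ)) := by
      rw [asc_succ, asc_succ]
      have h2 : ∀ j : ℕ, ((s+1)+1) + (j:ℝ) = (s+2) + (j:ℝ) := fun j => by ring
      rw [Finset.prod_congr rfl fun j _ => h2 j]
      ring
    simp only [hfdef, e1, Nat.factorial_succ, pow_succ]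
    push_cast
    have hi1 : ((i:ℝ) + 1) ≠ 0 := by positivity
    have hi2 : ((i:ℝ) + 1 + 1) ≠ 0 := by positivity
    field_simp
    ring
  have h2 : HasSum (fun i : ℕ => f (i + 2)) (s * (s+1) * z^2 * (1-z) ^ (-(s+2))) := by
    rw [hshift]; exact h
  have h3 := (hasSum_nat_add_iff (f := f) 2).mp h2
  have hz : ∑ i ∈ Finset.range 2, f i = 0 := by
    simp [hfdef, Finset.sum_range_succ]
  rw [hz, add_zero] at h3
  exact h3

lemma szasz_eq (n i : ℕ) (u : ℝ) :
    szaszBasis n i u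
      = ((n:ℝ)^i / (Nat.factorial i : ℝ)) * (u^i * Real.exp (-(n:ℝ) * u)) := by
  unfold szaszBasis
  rw [mul_pow]
  ring

lemma szasz_nonneg {n i : ℕ} {u : ℝ} (hu : 0 ≤ u) : 0 ≤ szaszBasis n i u := by
  rw [szasz_eq]; positivity

lemma integral_szasz_mul_pow (n i m : ℕ) (hn : 0 < n) :
    ∫ u in Ioi (0:ℝ), szaszBasis n i u * u ^ m
      = (Nat.factorial (i+m) : ℝ) / ((Nat.factorial i : ℝ) * (n:ℝ) ^ (m+1)) := by
  have hn0 : (0:ℝ) < n := by exact_mod_cast hn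
  have he : (fun u : ℝ => szaszBasis n i u * u ^ m)
      = fun u => ((n:ℝ)^i / (Nat.factorial i : ℝ)) * (u^(i+m) * Real.exp (-(n:ℝ) * u)) := by
    funext u
    rw [szasz_eq, pow_add]
    ring
  rw [he, MeasureTheory.integral_const_mul, integral_pow_mul_exp_neg hn0]
  have h1 : (n:ℝ) ^ (i+m+1) = (n:ℝ)^i * (n:ℝ)^(m+1) := by ring
  have hfac : ((Nat.factorial i : ℝ)) ≠ 0 := by positivity
  have hn' : (n:ℝ) ≠ 0 := hn0.ne'
  rw [h1]
  field_simp

lemma integrableOn_szasz_mul_pow (n i m : ℕ) (hn : 0 < n) :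
    IntegrableOn (fun u : ℝ => szaszBasis n i u * u ^ m) (Ioi 0) := by
  have hn0 : (0:ℝ) < n := by exact_mod_cast hn
  have he : (fun u : ℝ => szaszBasis n i u * u ^ m)
      = fun u => ((n:ℝ)^i / (Nat.factorial i : ℝ)) * (u^(i+m) * Real.exp (-(n:ℝ) * u)) := by
    funext u
    rw [szasz_eq, pow_add]
    ring
  rw [he]
  exact (integrableOn_pow_mul_exp_neg hn0).const_mul _

lemma integral_szasz_mul_exp (n i : ℕ) {c : ℝ} (hc : c < n) :
    ∫ u in Ioi (0:ℝ), szaszBasis n i u * Real.exp (c * u)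
      = (n:ℝ)^i / ((n:ℝ) - c) ^ (i+1) := by
  have hnc : (0:ℝ) < (n:ℝ) - c := by linarith
  have he : (fun u : ℝ => szaszBasis n i u * Real.exp (c * u))
      = fun u => ((n:ℝ)^i / (Nat.factorial i : ℝ)) * (u^i * Real.exp (-((n:ℝ) - c) * u)) := by
    funext u
    rw [szasz_eq, show -((n:ℝ) - c) * u = -(n:ℝ) * u + c * u by ring, Real.exp_add]
    ring
  rw [he, MeasureTheory.integral_const_mul, integral_pow_mul_exp_neg hnc]
  have hfac : (Nat.factorial i : ℝ) ≠ 0 := by positivity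
  field_simp

lemma integrableOn_szasz_mul_exp (n i : ℕ) {c : ℝ} (hc : c < n) :
    IntegrableOn (fun u : ℝ => szaszBasis n i u * Real.exp (c * u)) (Ioi 0) := by
  have hnc : (0:ℝ) < (n:ℝ) - c := by linarith
  have he : (fun u : ℝ => szaszBasis n i u * Real.exp (c * u))
      = fun u => ((n:ℝ)^i / (Nat.factorial i : ℝ)) * (u^i * Real.exp (-((n:ℝ) - c) * u)) := by
    funext u
    rw [szasz_eq, show -((n:ℝ) - c) * u = -(n:ℝ) * u + c * u by ring, Real.exp_add]
    ring
  rw [he]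
  exact (integrableOn_pow_mul_exp_neg hnc).const_mul _

lemma continuous_szasz (n i : ℕ) : Continuous (szaszBasis n i) := by
  unfold szaszBasis
  fun_prop

lemma integrableOn_szasz_mul_of_bound (n i : ℕ) {f : ℝ → ℝ} {M c : ℝ}
    (hc : c < n)
    (hmeas : AEStronglyMeasurable f (volume.restrict (Ioi 0)))
    (hbound : ∀ u : ℝ, 0 < u → |f u| ≤ M * Real.exp (c * u)) :
    IntegrableOn (fun u : ℝ => szaszBasis n i u * f u) (Ioi 0) := by
  apply MeasureTheory.Integrable.mono'
    ((integrableOn_szasz_mul_exp n i hc).const_mul M)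
  · exact ((continuous_szasz n i).aestronglyMeasurable.restrict).mul hmeas
  · filter_upwards [ae_restrict_mem measurableSet_Ioi] with u hu
    have hu0 : (0:ℝ) < u := hu
    rw [Real.norm_eq_abs, abs_mul, abs_of_nonneg (szasz_nonneg hu0.le)]
    calc szaszBasis n i u * |f u| ≤ szaszBasis n i u * (M * Real.exp (c * u)) :=
          mul_le_mul_of_nonneg_left (hbound u hu0) (szasz_nonneg hu0.le)
      _ = M * (szaszBasis n i u * Real.exp (c * u)) := by ring

end Stmt9Aux

set_option maxHeartbeats 2000000 in
open Stmt9Aux Set Real Topology in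
theorem stmt9 (g : ℝ → ℝ) (hg : ContinuousOn g (Set.Ici 0))
    (C A : ℝ) (hC : 0 < C) (hA : 0 < A)
    (hgrow : ∀ t : ℝ, 0 ≤ t → |g t| ≤ C * Real.exp (A * t))
    (α : ℕ → ℝ) (hα : ∀ n : ℕ, 0 < n → 0 < α n ∧ α n ≤ 1 / n)
    (b : ℝ) (hb : 0 < b) :
    TendstoUniformlyOn (fun (n : ℕ) (x : ℝ) => U n (α n) g x) g Filter.atTop
      (Set.Icc 0 b) := by
  rw [Metric.tendstoUniformlyOn_iff]
  intro ε hε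
  have hε4 : 0 < ε / 4 := by positivity
  set ε' : ℝ := ε / 4 with hε'def
  have hε' : 0 < ε' := hε4
  set KM : ℝ := 2 * Real.exp (16 * A * b) with hKMdef
  have hKM : 0 < KM := by positivity
  obtain ⟨R, hRε, hRb⟩ : ∃ R : ℝ, 2 * C * Real.exp (-(A * R)) * KM < ε' ∧ b + 1 ≤ R := by
    have h2 : Tendsto (fun R : ℝ => A * R) atTop atTop :=
      Tendsto.const_mul_atTop hA tendsto_id
    have h3 : Tendsto (fun R : ℝ => Real.exp (-(A * R))) atTop (𝓝 0) :=
      Real.tendsto_exp_atBot.comp (tendsto_neg_atTop_atBot.comp h2)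
    have h4 : Tendsto (fun R : ℝ => 2 * C * Real.exp (-(A * R)) * KM) atTop (𝓝 0) := by
      have := (h3.const_mul (2 * C)).mul_const KM
      simpa using this
    exact ((h4.eventually (gt_mem_nhds hε')).and (eventually_ge_atTop (b+1))).exists
  have hR0 : 0 < R := by linarith
  have hbR : b ≤ R := by linarith
  have hUC := (isCompact_Icc (a := (0:ℝ)) (b := R)).uniformContinuousOn_of_continuous
      (hg.mono Icc_subset_Ici_self)
  rw [Metric.uniformContinuousOn_iff] at hUC
  obtain ⟨δ, hδ0, hδ⟩ := hUC ε' hε'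
  set d : ℝ := δ / 2 with hddef
  have hd0 : 0 < d := by positivity
  set K2 : ℝ := 2 * C * Real.exp (A * R) / d ^ 2 with hK2def
  have hK20 : 0 < K2 := by positivity
  set K3 : ℝ := 2 * C * Real.exp (-(A * R)) with hK3def
  have hK30 : 0 < K3 := by positivity
  clear_value ε' KM d K2 K3
  obtain ⟨n₀, hn₀⟩ := exists_nat_gt (max (8 * A + 1) (K2 * (3 * b + 2) / ε'))
  rw [eventually_atTop]
  refine ⟨n₀ + 1, fun n hn => ?_⟩
  have hnn0 : (n₀:ℝ) < (n:ℝ) := by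
    exact_mod_cast Nat.lt_of_lt_of_le (Nat.lt_succ_self n₀) hn
  have hn8A : 8 * A + 1 < (n:ℝ) := lt_trans (lt_of_le_of_lt (le_max_left _ _) hn₀) hnn0
  have hnK2 : K2 * (3 * b + 2) / ε' < (n:ℝ) :=
    lt_trans (lt_of_le_of_lt (le_max_right _ _) hn₀) hnn0
  have hnR0 : (0:ℝ) < (n:ℝ) := by linarith
  have hnpos : 0 < n := by exact_mod_cast hnR0
  have hn1 : (1:ℝ) ≤ (n:ℝ) := by exact_mod_cast hnpos
  obtain ⟨ha0, ha1⟩ := hα n hnpos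
  set a : ℝ := α n with hadef
  intro x hx
  obtain ⟨hx0, hxb⟩ := hx
  -- basic quantities
  set dn : ℝ := a + 1 / (n:ℝ) with hdndef
  have hdn0 : 0 < dn := by
    rw [hdndef]; positivity
  set z : ℝ := a / dn with hzdef
  set s : ℝ := x / a with hsdef
  clear_value dn z s
  have hs0 : 0 ≤ s := by rw [hsdef]; exact div_nonneg hx0 ha0.le
  have hz0 : 0 ≤ z := by rw [hzdef]; exact div_nonneg ha0.le hdn0.le
  have hz1 : z < 1 := by
    rw [hzdef, div_lt_one hdn0, hdndef]
    have : 0 < 1/(n:ℝ) := by positivity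
    linarith
  have h1z : 0 < 1 - z := by linarith
  have hzhalf : z ≤ 1/2 := by
    rw [hzdef, div_le_iff₀ hdn0, hdndef]
    linarith [ha1]
  have h1zeq : 1 - z = (1/(n:ℝ)) / dn := by
    rw [hzdef, hdndef]
    field_simp
    ring
  have hratio : z / (1 - z) = (n:ℝ) * a := by
    rw [h1zeq, hzdef, hdndef]
    field_simp
  have hnd : (1:ℝ) ≤ (n:ℝ) * dn := by
    rw [hdndef]
    have he : (n:ℝ)*(a+1/(n:ℝ)) = (n:ℝ)*a+1 := by field_simp
    rw [he]
    linarith only [mul_pos hnR0 ha0]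
  -- r
  set r : ℝ := (n:ℝ) / ((n:ℝ) - 2*A) with hrdef
  clear_value r
  have hn2A : 2*A < (n:ℝ) := by linarith
  have hn2A0 : 0 < (n:ℝ) - 2*A := by linarith
  have hr0 : 0 < r := by rw [hrdef]; positivity
  have hr1 : 1 ≤ r := by rw [hrdef, le_div_iff₀ hn2A0]; linarith only [hA]
  have hr43 : r ≤ 4/3 := by rw [hrdef, div_le_iff₀ hn2A0]; linarith only [hn8A]
  have hzr23 : z * r ≤ 2/3 := by
    have h := mul_le_mul hzhalf hr43 hr0.le (by norm_num)
    linarith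
  have hzr1 : z * r < 1 := by linarith
  have hzr0 : 0 ≤ z * r := mul_nonneg hz0 hr0.le
  have h1zr : 0 < 1 - z*r := by linarith
  -- the coefficient P and integral T
  set P : ℕ → ℝ := fun i => (1 + (n:ℝ) * a) ^ (-x / a) * (a + 1 / (n:ℝ)) ^ (-(i:ℤ)) *
      (risingFac x a i / (Nat.factorial i : ℝ)) with hPdef
  set T : ℕ → ℝ := fun i => ∫ u in Ioi (0:ℝ), szaszBasis n i u * g u with hTdef
  clear_value P T
  have hPeq : ∀ i : ℕ, P i = (1 - z) ^ s *
      ((∏ j ∈ Finset.range i, (s + (j:ℝ))) / (Nat.factorial i : ℝ) * z ^ i) := by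
    intro i
    have hfrac : (1:ℝ) + (n:ℝ) * a = (n:ℝ) * dn := by
      rw [hdndef]; field_simp; ring
    have h1zinv : 1 - z = ((n:ℝ) * dn)⁻¹ := by
      rw [h1zeq, one_div, div_eq_mul_inv, ← mul_inv]
    have hpow1 : (1 + (n:ℝ)*a) ^ (-x / a) = (1-z) ^ s := by
      rw [hfrac, h1zinv, Real.inv_rpow (by positivity), ← Real.rpow_neg (by positivity),
        hsdef, neg_div]
    have hrising : risingFac x a i = a ^ i * ∏ j ∈ Finset.range i, (s + (j:ℝ)) := by
      unfold risingFac
      have hxj : ∀ j ∈ Finset.range i, x + (j:ℝ) * a = a * (s + (j:ℝ)) := by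
        intro j _
        rw [hsdef]
        field_simp
      rw [Finset.prod_congr rfl hxj, Finset.prod_mul_distrib, Finset.prod_const,
        Finset.card_range]
    have hzpow : (a + 1/(n:ℝ)) ^ (-(i:ℤ)) = ((dn:ℝ) ^ i)⁻¹ := by
      rw [← hdndef, zpow_neg, zpow_natCast]
    simp only [hPdef]
    rw [hpow1, hrising, hzpow, hzdef, div_pow]
    have hdni : (dn:ℝ)^i ≠ 0 := pow_ne_zero _ hdn0.ne'
    field_simp
  have hPnn : ∀ i, 0 ≤ P i := by
    intro i
    rw [hPeq i]
    apply mul_nonneg (Real.rpow_nonneg h1z.le _)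
    exact mul_nonneg (div_nonneg (asc_nonneg hs0 i) (by positivity)) (pow_nonneg hz0 i)
  -- basic HasSum facts
  have hS0 : HasSum P (1:ℝ) := by
    have h := (hasSum_ascSeries hs0 hz0 hz1).mul_left ((1-z) ^ s)
    have he : (1-z) ^ s * (1-z) ^ (-s) = 1 := by
      rw [← Real.rpow_add h1z]; simp
    rw [he] at h
    have hPfun : P = fun i : ℕ => (1-z)^s *
        ((∏ j ∈ Finset.range i, (s + (j:ℝ))) / (Nat.factorial i : ℝ) * z ^ i) :=
      funext hPeq
    rw [hPfun]
    exact h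
  have hS1 : HasSum (fun i : ℕ => P i * (i:ℝ)) ((n:ℝ) * x) := by
    have h := (hasSum_ascSeries_id hs0 hz0 hz1).mul_left ((1-z) ^ s)
    have hfn : (fun i : ℕ => (1-z)^s *
        ((∏ j ∈ Finset.range i, (s + (j:ℝ))) / (Nat.factorial i : ℝ) * z^i * (i:ℝ)))
        = fun i : ℕ => P i * (i:ℝ) := by
      funext i; rw [hPeq i]; ring
    rw [hfn] at h
    have hval : (1-z)^s * (s * z * (1-z) ^ (-(s+1))) = (n:ℝ) * x := by
      have e1 : (1-z)^s * (1-z) ^ (-(s+1)) = (1-z)⁻¹ := by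
        rw [← Real.rpow_add h1z, show s + -(s+1) = (-1 : ℝ) by ring, Real.rpow_neg_one]
      calc (1-z)^s * (s * z * (1-z) ^ (-(s+1)))
          = s * z * ((1-z)^s * (1-z) ^ (-(s+1))) := by ring
        _ = s * (z / (1-z)) := by rw [e1]; ring
        _ = (n:ℝ) * x := by rw [hratio, hsdef]; field_simp
    rw [hval] at h
    exact h
  have hS2 : HasSum (fun i : ℕ => P i * ((i:ℝ) * ((i:ℝ) - 1))) ((n:ℝ)^2 * x * (x + a)) := by
    have h := (hasSum_ascSeries_id2 hs0 hz0 hz1).mul_left ((1-z) ^ s)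
    have hfn : (fun i : ℕ => (1-z)^s *
        ((∏ j ∈ Finset.range i, (s + (j:ℝ))) / (Nat.factorial i : ℝ) * z^i *
          ((i:ℝ) * ((i:ℝ) - 1))))
        = fun i : ℕ => P i * ((i:ℝ) * ((i:ℝ) - 1)) := by
      funext i; rw [hPeq i]; ring
    rw [hfn] at h
    have hval : (1-z)^s * (s * (s+1) * z^2 * (1-z) ^ (-(s+2))) = (n:ℝ)^2 * x * (x + a) := by
      have e2 : (1-z)^s * (1-z) ^ (-(s+2)) = ((1-z)^(2:ℕ))⁻¹ := by
        rw [← Real.rpow_add h1z, show s + -(s+2) = (-2 : ℝ) by ring,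
          show (-2:ℝ) = -((2:ℕ):ℝ) by norm_num, Real.rpow_neg h1z.le, Real.rpow_natCast]
      calc (1-z)^s * (s * (s+1) * z^2 * (1-z) ^ (-(s+2)))
          = s * (s+1) * z^2 * ((1-z)^s * (1-z) ^ (-(s+2))) := by ring
        _ = s * (s+1) * (z / (1-z))^2 := by rw [e2, div_pow]; ring
        _ = (n:ℝ)^2 * x * (x+a) := by
            rw [hratio, hsdef]
            have hane : a ≠ 0 := ha0.ne'
            have e3 : x / a * (x / a + 1) * ((n:ℝ) * a) ^ 2
                = (x / a * a) * ((x / a * a) + a) * (n:ℝ)^2 := by ring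
            rw [e3, div_mul_cancel₀ _ hane]
            ring
    rw [hval] at h
    exact h
  have hSr : HasSum (fun i : ℕ => P i * r ^ i) ((1-z)^s * (1 - z*r) ^ (-s)) := by
    have h := (hasSum_ascSeries hs0 hzr0 hzr1).mul_left ((1-z) ^ s)
    have hfn : (fun i : ℕ => (1-z)^s *
        ((∏ j ∈ Finset.range i, (s + (j:ℝ))) / (Nat.factorial i : ℝ) * (z*r)^i))
        = fun i : ℕ => P i * r ^ i := by
      funext i; rw [hPeq i, mul_pow]; ring
    rw [hfn] at h
    exact h
  set Mval : ℝ := r * ((1-z)^s * (1 - z*r) ^ (-s)) with hMdef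
  clear_value Mval
  have hSE : HasSum (fun i : ℕ => P i * r ^ (i+1)) Mval := by
    have h := hSr.mul_left r
    have hfn : (fun i : ℕ => r * (P i * r ^ i)) = fun i : ℕ => P i * r ^ (i+1) := by
      funext i; rw [pow_succ]; ring
    rw [hfn] at h
    rw [hMdef]
    exact h
  have hMbound : Mval ≤ KM := by
    set w : ℝ := (1-z)/(1-z*r) with hwdef
    clear_value w
    have hw0 : 0 < w := by rw [hwdef]; exact div_pos h1z h1zr
    have hw1 : w - 1 = z*(r-1)/(1-z*r) := by
      rw [hwdef]; field_simp; ring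
    have hsz : s * z ≤ b * (n:ℝ) := by
      have e : s * z = x / dn := by
        rw [hsdef, hzdef]
        field_simp
      rw [e, div_le_iff₀ hdn0]
      have h6 := mul_le_mul_of_nonneg_left hnd hb.le
      linarith only [h6, hxb]
    have hr1e : r - 1 = 2*A/((n:ℝ)-2*A) := by
      rw [hrdef]; field_simp; ring
    have hden : (3/4) * (n:ℝ) ≤ (n:ℝ) - 2*A := by linarith only [hn8A]
    have hr1le : r - 1 ≤ 8*A/(3*(n:ℝ)) := by
      rw [hr1e]
      calc 2*A/((n:ℝ)-2*A) ≤ 2*A/((3/4)*(n:ℝ)) := by gcongr <;> positivity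
        _ = 8*A/(3*(n:ℝ)) := by
            rw [div_eq_div_iff (by positivity) (by positivity)]; ring
    have hprod : s*z*(r-1) ≤ 8*A*b/3 := by
      have h1 : s*z*(r-1) ≤ (b*(n:ℝ)) * (8*A/(3*(n:ℝ))) := by
        apply mul_le_mul hsz hr1le (by linarith [hr1]) (by positivity)
      have h2 : (b*(n:ℝ)) * (8*A/(3*(n:ℝ))) = 8*A*b/3 := by
        field_simp
      linarith
    have h13 : (1:ℝ)/3 ≤ 1 - z*r := by linarith
    have hkey : s * (w - 1) ≤ 16*A*b := by
      rw [hw1, ← mul_div_assoc, div_le_iff₀ h1zr]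
      have h7 := mul_le_mul_of_nonneg_left h13 (by positivity : (0:ℝ) ≤ 16*A*b)
      linarith only [hprod, h7, mul_pos hA hb]
    have hws : w ^ s ≤ Real.exp (16*A*b) := by
      rw [Real.rpow_def_of_pos hw0, Real.exp_le_exp]
      calc Real.log w * s ≤ (w - 1) * s :=
            mul_le_mul_of_nonneg_right (Real.log_le_sub_one_of_pos hw0) hs0
        _ = s * (w-1) := by ring
        _ ≤ 16*A*b := hkey
    have hMeq : Mval = r * w ^ s := by
      rw [hMdef, Real.rpow_neg h1zr.le, hwdef, Real.div_rpow h1z.le h1zr.le]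
      ring
    calc Mval = r * w^s := hMeq
      _ ≤ (4/3) * Real.exp (16*A*b) :=
          mul_le_mul hr43 hws (Real.rpow_nonneg hw0.le s) (by norm_num)
      _ ≤ KM := by rw [hKMdef]; linarith only [Real.exp_pos (16*A*b)]
  have hM0 : 0 ≤ Mval := by
    rw [hMdef]
    exact mul_nonneg hr0.le (mul_nonneg (Real.rpow_nonneg h1z.le _)
      (Real.rpow_nonneg h1zr.le _))
  -- second-moment series
  set V2 : ℕ → ℝ := fun i => (i:ℝ)*((i:ℝ)-1)/(n:ℝ)^2 + (i:ℝ)*(4/(n:ℝ)^2 - 2*x/(n:ℝ))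
      + (2/(n:ℝ)^2 - 2*x/(n:ℝ) + x^2) with hV2def
  set Θval : ℝ := x*a + 2*x/(n:ℝ) + 2/(n:ℝ)^2 with hΘdef
  clear_value V2 Θval
  have hSΘ : HasSum (fun i : ℕ => P i * V2 i) Θval := by
    have h := ((hS2.mul_right ((1:ℝ)/(n:ℝ)^2)).add
        (hS1.mul_right (4/(n:ℝ)^2 - 2*x/(n:ℝ)))).add
        (hS0.mul_right (2/(n:ℝ)^2 - 2*x/(n:ℝ) + x^2))
    have hfn : (fun i : ℕ => (P i * ((i:ℝ)*((i:ℝ)-1)) * ((1:ℝ)/(n:ℝ)^2)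
          + P i * (i:ℝ) * (4/(n:ℝ)^2 - 2*x/(n:ℝ)))
          + P i * (2/(n:ℝ)^2 - 2*x/(n:ℝ) + x^2))
        = fun i : ℕ => P i * V2 i := by
      funext i; simp only [hV2def]; ring
    rw [hfn] at h
    have hval : ((n:ℝ)^2*x*(x+a)) * ((1:ℝ)/(n:ℝ)^2) + ((n:ℝ)*x) * (4/(n:ℝ)^2 - 2*x/(n:ℝ))
          + 1 * (2/(n:ℝ)^2 - 2*x/(n:ℝ) + x^2) = Θval := by
      rw [hΘdef]; field_simp; ring
    rw [hval] at h
    exact h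
  have hΘb : Θval ≤ (3*b+2)/(n:ℝ) := by
    rw [hΘdef]
    have h1 : x*a ≤ b/(n:ℝ) := by
      calc x*a ≤ b*a := mul_le_mul_of_nonneg_right hxb ha0.le
        _ ≤ b*(1/(n:ℝ)) := mul_le_mul_of_nonneg_left ha1 hb.le
        _ = b/(n:ℝ) := by ring
    have h2 : 2*x/(n:ℝ) ≤ 2*b/(n:ℝ) := by gcongr
    have h3 : 2/(n:ℝ)^2 ≤ 2/(n:ℝ) := by
      rw [div_le_div_iff₀ (by positivity) hnR0]
      have h5 : (n:ℝ)*1 ≤ (n:ℝ)*(n:ℝ) := mul_le_mul_of_nonneg_left hn1 hnR0.le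
      linarith only [h5]
    have h4 : (3*b+2)/(n:ℝ) = b/(n:ℝ) + 2*b/(n:ℝ) + 2/(n:ℝ) := by ring
    linarith only [h1, h2, h3, h4]
  -- integrability
  have hAn : A < (n:ℝ) := by linarith
  have h2An : 2*A < (n:ℝ) := hn2A
  have hgmeas : AEStronglyMeasurable g (volume.restrict (Ioi (0:ℝ))) :=
    (hg.mono Ioi_subset_Ici_self).aestronglyMeasurable measurableSet_Ioi
  have hgb : ∀ u : ℝ, 0 < u → |g u| ≤ C * Real.exp (A*u) := fun u hu => hgrow u hu.le
  have hTint : ∀ i : ℕ, IntegrableOn (fun u => szaszBasis n i u * g u) (Ioi 0) := fun i =>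
    integrableOn_szasz_mul_of_bound n i hAn hgmeas hgb
  have hI0f : ∀ i : ℕ, ∫ u in Ioi (0:ℝ), szaszBasis n i u = 1/(n:ℝ) := by
    intro i
    have h := integral_szasz_mul_pow n i 0 hnpos
    simp only [pow_zero, mul_one, Nat.add_zero, pow_one] at h
    rw [h]
    have hf : (Nat.factorial i : ℝ) ≠ 0 := by positivity
    field_simp
    ring
  have hI0int : ∀ i : ℕ, IntegrableOn (fun u : ℝ => szaszBasis n i u) (Ioi 0) := by
    intro i
    have h := integrableOn_szasz_mul_pow n i 0 hnpos
    simpa using h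
  -- pointwise majorant
  have hmaj : ∀ u : ℝ, 0 < u →
      |g u - g x| ≤ ε' + K2*(u-x)^2 + K3*Real.exp (2*A*u) := by
    intro u hu
    have hK2nn : 0 ≤ K2*(u-x)^2 := mul_nonneg hK20.le (sq_nonneg _)
    have hK3nn : 0 ≤ K3*Real.exp (2*A*u) := mul_nonneg hK30.le (Real.exp_pos _).le
    have hgu := hgrow u hu.le
    have hgx := hgrow x hx0
    rcases le_or_gt u R with huR | huR
    · rcases le_or_gt |u - x| d with hud | hud
      · have hmem_u : u ∈ Icc (0:ℝ) R := ⟨hu.le, huR⟩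
        have hmem_x : x ∈ Icc (0:ℝ) R := ⟨hx0, by linarith⟩
        have hdist : dist u x < δ := by
          rw [Real.dist_eq]; rw [hddef] at hud; linarith
        have hd2 := hδ u hmem_u x hmem_x hdist
        rw [Real.dist_eq] at hd2
        linarith
      · have e1 : Real.exp (A*u) ≤ Real.exp (A*R) := by
          rw [Real.exp_le_exp]; exact mul_le_mul_of_nonneg_left huR hA.le
        have e2 : Real.exp (A*x) ≤ Real.exp (A*R) := by
          rw [Real.exp_le_exp]; exact mul_le_mul_of_nonneg_left (by linarith) hA.le
        have b1 : |g u| ≤ C * Real.exp (A*R) :=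
          hgu.trans (mul_le_mul_of_nonneg_left e1 hC.le)
        have b2 : |g x| ≤ C * Real.exp (A*R) :=
          hgx.trans (mul_le_mul_of_nonneg_left e2 hC.le)
        have h1 : |g u - g x| ≤ 2*C*Real.exp (A*R) := by
          linarith only [abs_sub (g u) (g x), b1, b2]
        have h2 : d^2 ≤ (u-x)^2 :=
          (pow_le_pow_left₀ hd0.le hud.le 2).trans_eq (sq_abs _)
        have h3 : 2*C*Real.exp (A*R) = K2 * d^2 := by
          rw [hK2def]; field_simp
        have h4 : K2*d^2 ≤ K2*(u-x)^2 := mul_le_mul_of_nonneg_left h2 hK20.le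
        linarith only [h1, h3, h4, hε', hK3nn]
    · have e2 : Real.exp (A*x) ≤ Real.exp (A*u) := by
        rw [Real.exp_le_exp]; exact mul_le_mul_of_nonneg_left (by linarith) hA.le
      have b2 : |g x| ≤ C * Real.exp (A*u) :=
        hgx.trans (mul_le_mul_of_nonneg_left e2 hC.le)
      have h1 : |g u - g x| ≤ 2*C*Real.exp (A*u) := by
        linarith only [abs_sub (g u) (g x), hgu, b2]
      have h2 : 2*C*Real.exp (A*u) ≤ K3 * Real.exp (2*A*u) := by
        rw [hK3def]
        have he : Real.exp (A*u) ≤ Real.exp (-(A*R)) * Real.exp (2*A*u) := by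
          rw [← Real.exp_add, Real.exp_le_exp]
          have h8 := mul_pos hA (sub_pos.mpr huR)
          linarith only [h8]
        have h9 := mul_le_mul_of_nonneg_left he (by positivity : (0:ℝ) ≤ 2*C)
        linarith only [h9]
      linarith only [h1, h2, hε', hK2nn]
  -- per-term bound
  set W : ℕ → ℝ := fun i => P i * ((n:ℝ) * T i - g x) with hWdef
  set D : ℕ → ℝ := fun i => P i * ε' + K2 * (P i * V2 i) + K3 * (P i * r^(i+1)) with hDdef
  clear_value W D
  have hDsum : HasSum D (1*ε' + K2*Θval + K3*Mval) := by
    have h := ((hS0.mul_right ε').add (hSΘ.mul_left K2)).add (hSE.mul_left K3)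
    have hfn : (fun i : ℕ => P i * ε' + K2 * (P i * V2 i) + K3 * (P i * r^(i+1))) = D := by
      rw [hDdef]
    rw [hfn] at h
    exact h
  have hterm : ∀ i : ℕ, ‖W i‖ ≤ D i := by
    intro i
    have hfn0 : (fun u : ℝ => szaszBasis n i u * (g u - g x))
        = fun u => szaszBasis n i u * g u - szaszBasis n i u * g x := by
      funext u; ring
    have hsub_int : IntegrableOn (fun u : ℝ => szaszBasis n i u * (g u - g x)) (Ioi 0) := by
      rw [hfn0]
      exact (hTint i).sub ((hI0int i).mul_const (g x))
    have key1 : (n:ℝ) * T i - g x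
        = (n:ℝ) * ∫ u in Ioi (0:ℝ), szaszBasis n i u * (g u - g x) := by
      simp only [hTdef]
      rw [hfn0, integral_sub (hTint i) ((hI0int i).mul_const (g x)), integral_mul_const,
        hI0f i]
      field_simp
    have I1 := integrableOn_szasz_mul_pow n i 1 hnpos
    have I2 := integrableOn_szasz_mul_pow n i 2 hnpos
    have IE := integrableOn_szasz_mul_exp n i h2An
    have hfn1 : (fun u : ℝ => szaszBasis n i u * (ε' + K2*(u-x)^2 + K3*Real.exp (2*A*u)))
          = fun u => ((ε' + K2*x^2) * szaszBasis n i u + K2 * (szaszBasis n i u * u^2)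
              - (2*x*K2) * (szaszBasis n i u * u^1))
              + K3 * (szaszBasis n i u * Real.exp (2*A*u)) := by
      funext u; ring
    have Imaj : IntegrableOn (fun u : ℝ =>
        szaszBasis n i u * (ε' + K2*(u-x)^2 + K3*Real.exp (2*A*u))) (Ioi 0) := by
      rw [hfn1]
      exact ((((hI0int i).const_mul _).add (I2.const_mul _)).sub
        (I1.const_mul _)).add (IE.const_mul _)
    have key3 : (n:ℝ) * ∫ u in Ioi (0:ℝ),
        szaszBasis n i u * (ε' + K2*(u-x)^2 + K3*Real.exp (2*A*u))
        = ε' + K2 * V2 i + K3 * r^(i+1) := by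
      have J1 : Integrable (fun u : ℝ => (ε' + K2*x^2) * szaszBasis n i u)
          (volume.restrict (Ioi 0)) := (hI0int i).const_mul _
      have J2 : Integrable (fun u : ℝ => K2 * (szaszBasis n i u * u^2))
          (volume.restrict (Ioi 0)) := I2.const_mul _
      have J3 : Integrable (fun u : ℝ => (2*x*K2) * (szaszBasis n i u * u^1))
          (volume.restrict (Ioi 0)) := I1.const_mul _
      have J4 : Integrable (fun u : ℝ => K3 * (szaszBasis n i u * Real.exp (2*A*u)))
          (volume.restrict (Ioi 0)) := IE.const_mul _
      have J12 : Integrable (fun u : ℝ => (ε' + K2*x^2) * szaszBasis n i u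
          + K2 * (szaszBasis n i u * u^2)) (volume.restrict (Ioi 0)) := J1.add J2
      have J123 : Integrable (fun u : ℝ => (ε' + K2*x^2) * szaszBasis n i u
          + K2 * (szaszBasis n i u * u^2) - (2*x*K2) * (szaszBasis n i u * u^1))
          (volume.restrict (Ioi 0)) := J12.sub J3
      rw [hfn1]
      rw [integral_add J123 J4, integral_sub J12 J3, integral_add J1 J2,
        integral_const_mul, integral_const_mul, integral_const_mul, integral_const_mul,
        hI0f i, integral_szasz_mul_pow n i 2 hnpos, integral_szasz_mul_pow n i 1 hnpos,
        integral_szasz_mul_exp n i h2An]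
      have hfac1 : ((Nat.factorial (i+1) : ℕ) : ℝ) = ((i:ℝ)+1) * (Nat.factorial i : ℝ) := by
        rw [Nat.factorial_succ]; push_cast; ring
      have hfac2 : ((Nat.factorial (i+2) : ℕ) : ℝ)
          = ((i:ℝ)+2) * (((i:ℝ)+1) * (Nat.factorial i : ℝ)) := by
        rw [show i+2 = (i+1)+1 from rfl, Nat.factorial_succ, Nat.factorial_succ]
        push_cast; ring
      have hrpow : r^(i+1) = (n:ℝ)^(i+1) / ((n:ℝ)-2*A)^(i+1) := by
        rw [hrdef, div_pow]
      rw [hfac1, hfac2, hrpow]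
      have hfne : (Nat.factorial i : ℝ) ≠ 0 := by positivity
      have hne1 : ((n:ℝ)-2*A) ≠ 0 := hn2A0.ne'
      simp only [hV2def]
      field_simp
      ring
    have habs : |∫ u in Ioi (0:ℝ), szaszBasis n i u * (g u - g x)|
        ≤ ∫ u in Ioi (0:ℝ), szaszBasis n i u * (ε' + K2*(u-x)^2 + K3*Real.exp (2*A*u)) := by
      calc |∫ u in Ioi (0:ℝ), szaszBasis n i u * (g u - g x)|
          ≤ ∫ u in Ioi (0:ℝ), ‖szaszBasis n i u * (g u - g x)‖ := by
            rw [← Real.norm_eq_abs]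
            exact norm_integral_le_integral_norm _
        _ ≤ _ := by
            apply setIntegral_mono_on hsub_int.norm Imaj measurableSet_Ioi
            intro u hu
            have hu0 : (0:ℝ) < u := hu
            rw [Real.norm_eq_abs, abs_mul, abs_of_nonneg (szasz_nonneg hu0.le)]
            exact mul_le_mul_of_nonneg_left (hmaj u hu0) (szasz_nonneg hu0.le)
    rw [Real.norm_eq_abs]
    simp only [hWdef]
    rw [abs_mul, abs_of_nonneg (hPnn i), key1, abs_mul, abs_of_nonneg hnR0.le]
    have hmid : (n:ℝ) * |∫ u in Ioi (0:ℝ), szaszBasis n i u * (g u - g x)|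
        ≤ ε' + K2 * V2 i + K3 * r^(i+1) := by
      rw [← key3]
      exact mul_le_mul_of_nonneg_left habs hnR0.le
    calc P i * ((n:ℝ) * |∫ u in Ioi (0:ℝ), szaszBasis n i u * (g u - g x)|)
        ≤ P i * (ε' + K2 * V2 i + K3 * r^(i+1)) := mul_le_mul_of_nonneg_left hmid (hPnn i)
      _ = D i := by simp only [hDdef]; ring
  have hWsum : Summable W := Summable.of_norm_bounded hDsum.summable hterm
  have hUeq : U n a g x - g x = ∑' i, W i := by
    have h1 : U n a g x = ∑' i : ℕ, ((n:ℝ) * (P i * T i)) := by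
      simp only [U, hPdef, hTdef]
      rw [← tsum_mul_left]
    have h2 : (fun i : ℕ => (n:ℝ) * (P i * T i)) = fun i : ℕ => W i + P i * g x := by
      funext i; simp only [hWdef]; ring
    rw [h1, h2, Summable.tsum_add hWsum ((hS0.mul_right (g x)).summable),
      (hS0.mul_right (g x)).tsum_eq, one_mul]
    ring
  rw [Real.dist_eq, abs_sub_comm, hUeq]
  have hnorm : Summable (fun i => ‖W i‖) :=
    Summable.of_nonneg_of_le (fun i => norm_nonneg _) hterm hDsum.summable
  have hΘ0 : 0 ≤ Θval := by
    rw [hΘdef]; positivity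
  calc |∑' i, W i| ≤ ∑' i, ‖W i‖ := by
        rw [← Real.norm_eq_abs]; exact norm_tsum_le_tsum_norm hnorm
    _ ≤ ∑' i, D i := Summable.tsum_le_tsum hterm hnorm hDsum.summable
    _ = 1*ε' + K2*Θval + K3*Mval := hDsum.tsum_eq
    _ < ε := by
        have hK2Θ : K2*Θval ≤ ε' := by
          have h1 : K2*Θval ≤ K2*((3*b+2)/(n:ℝ)) := mul_le_mul_of_nonneg_left hΘb hK20.le
          have h2 : K2*((3*b+2)/(n:ℝ)) ≤ ε' := by
            rw [← mul_div_assoc, div_le_iff₀ hnR0]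
            rw [div_lt_iff₀ hε'] at hnK2
            linarith only [hnK2]
          exact h1.trans h2
        have hK3M : K3*Mval < ε' := by
          have hh : K3*Mval ≤ K3*KM := mul_le_mul_of_nonneg_left hMbound hK30.le
          linarith [hRε]
        rw [hε'def] at hK2Θ hK3M ⊢
        linarith only [hK2Θ, hK3M, hε]
end

section
/- There exists a constant M > 0 such that for every bounded continuous function f : [0,∞) → ℝ, every positive integer n, every real α with 0 < α ≤ 1/n and every real x ≥ 0: |U_n^[α](f; x) − f(x)| ≤ M·ω₂(f; √(ρ_n(x))) + ω(f; 1/n), where ρ_n(x) = Θ_{n,2}^[α](x) + 1/n². -/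
open MeasureTheory Filter

noncomputable section

/-- First-order modulus of continuity on `[0,∞)`. -/
def omega1 (f : ℝ → ℝ) (δ : ℝ) : ℝ :=
  sSup {y | ∃ x h : ℝ, 0 ≤ x ∧ 0 ≤ h ∧ h ≤ δ ∧ y = |f (x + h) - f x|}

/-- Second-order modulus of smoothness on `[0,∞)`. -/
def omega2 (f : ℝ → ℝ) (δ : ℝ) : ℝ :=
  sSup {y | ∃ x h : ℝ, 0 ≤ x ∧ 0 ≤ h ∧ h ≤ δ ∧ y = |f (x + 2 * h) - 2 * f (x + h) + f x|}

end

section Aux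

open MeasureTheory Set Filter

lemma risingFac_succ' (x α : ℝ) (i : ℕ) :
    risingFac x α (i + 1) = x * risingFac (x + α) α i := by
  unfold risingFac
  rw [Finset.prod_range_succ']
  have : ∀ j : ℕ, (x + (↑(j + 1) : ℝ) * α) = (x + α) + (j : ℝ) * α := by
    intro j; push_cast; ring
  simp only [this, Nat.cast_zero, zero_mul, add_zero]
  ring

lemma risingFac_nonneg {x α : ℝ} (hx : 0 ≤ x) (hα : 0 ≤ α) (i : ℕ) :
    0 ≤ risingFac x α i := by
  unfold risingFac
  exact Finset.prod_nonneg fun j _ => by positivity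

/-- The generating function of the rising factorial. -/
lemma genHasSum {α x t : ℝ} (hα : 0 < α) (hx : 0 ≤ x) (ht : 0 ≤ t) (hq : α * t < 1) :
    HasSum (fun i : ℕ => risingFac x α i * t ^ i / (Nat.factorial i : ℝ))
      ((1 - α * t) ^ (-(x / α))) := by
  rcases hx.eq_or_lt with hx0 | hx
  · -- x = 0
    subst hx0
    have h0 : ∀ i : ℕ, i ≠ 0 →
        risingFac 0 α i * t ^ i / (Nat.factorial i : ℝ) = 0 := by
      intro i hi
      obtain ⟨j, rfl⟩ := Nat.exists_eq_succ_of_ne_zero hi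
      rw [risingFac_succ']
      simp
    have := hasSum_single (f := fun i : ℕ => risingFac 0 α i * t ^ i / (Nat.factorial i : ℝ)) 0
      (fun b hb => h0 b hb)
    simpa [risingFac] using this
  · -- 0 < x
    set z : ℝ := x / α with hz_def
    have hz : 0 < z := div_pos hx hα
    set q : ℝ := α * t with hq_def
    have hq0 : 0 ≤ q := mul_nonneg hα.le ht
    have h1q : 0 < 1 - q := by linarith
    set P : ℕ → ℝ := fun i => ∏ j ∈ Finset.range i, (z + (j : ℝ)) with hP_def
    have hPpos : ∀ i, 0 < P i := by
      intro i; exact Finset.prod_pos fun j _ => by positivity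
    have hxz : x = α * z := by rw [hz_def]; field_simp
    have hrf : ∀ i : ℕ, risingFac x α i * t ^ i = P i * q ^ i := by
      intro i
      have h1 : risingFac x α i = α ^ i * P i := by
        unfold risingFac
        calc ∏ j ∈ Finset.range i, (x + (j:ℝ) * α)
            = ∏ j ∈ Finset.range i, (α * (z + (j:ℝ))) :=
              Finset.prod_congr rfl (fun j _ => by rw [hxz]; ring)
          _ = α ^ i * P i := by
              rw [Finset.prod_mul_distrib, Finset.prod_const, Finset.card_range]
      rw [h1, hq_def, mul_pow]; ring
    set a : ℕ → ℝ := fun i => P i * q ^ i / (Nat.factorial i : ℝ) with ha_def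
    have ha_nonneg : ∀ i, 0 ≤ a i := by
      intro i
      have := (hPpos i).le
      positivity
    have hrec : ∀ i : ℕ, a (i + 1) = a i * (q * (z + i) / (i + 1)) := by
      intro i
      simp only [ha_def, hP_def, Finset.prod_range_succ, pow_succ, Nat.factorial_succ]
      push_cast
      field_simp
    -- summability by ratio test
    have hsum_a : Summable a := by
      apply summable_of_ratio_norm_eventually_le (r := (1 + q) / 2) (by linarith)
      have hrq : 0 < (1 + q) / 2 - q := by linarith
      obtain ⟨N, hN⟩ := exists_nat_ge ((q * z) / ((1 + q) / 2 - q))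
      filter_upwards [eventually_ge_atTop N] with i hi
      have hiN : ((q * z) / ((1 + q) / 2 - q)) ≤ (i : ℝ) := by
        calc ((q * z) / ((1 + q) / 2 - q)) ≤ (N : ℝ) := hN
          _ ≤ (i : ℝ) := by exact_mod_cast hi
      have hfrac : q * (z + i) ≤ ((1 + q) / 2) * (i + 1) := by
        have := (div_le_iff₀ hrq).mp hiN
        nlinarith [hq0, hz.le]
      have hratio : q * (z + i) / (i + 1) ≤ (1 + q) / 2 := by
        rw [div_le_iff₀ (by positivity)]
        linarith
      have hzi : (0:ℝ) ≤ z + i := by positivity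
      have hr0 : 0 ≤ q * (z + i) / (i + 1) := by positivity
      rw [hrec i, Real.norm_eq_abs, Real.norm_eq_abs,
        abs_of_nonneg (mul_nonneg (ha_nonneg i) hr0), abs_of_nonneg (ha_nonneg i),
        mul_comm ((1+q)/2) (a i)]
      exact mul_le_mul_of_nonneg_left hratio (ha_nonneg i)
    -- Gamma facts
    have hGamma : ∀ i : ℕ, Real.Gamma (z + i) = P i * Real.Gamma z := by
      intro i
      induction i with
      | zero => simp [hP_def]
      | succ m ih =>
        have hzm : z + m ≠ 0 := by positivity
        have : z + (↑(m + 1) : ℝ) = (z + m) + 1 := by push_cast; ring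
        rw [this, Real.Gamma_add_one hzm, ih, hP_def]
        simp only [Finset.prod_range_succ]
        ring
    -- integral representation
    set G : ℕ → ℝ → ℝ := fun i u => u ^ (z - 1) * Real.exp (-u) * ((q * u) ^ i / (Nat.factorial i : ℝ))
      with hG_def
    have hGcongr : ∀ i : ℕ, ∀ u ∈ Ioi (0:ℝ),
        G i u = (q ^ i / (Nat.factorial i : ℝ)) * (Real.exp (-u) * u ^ (z + i - 1)) := by
      intro i u hu
      have hu0 : (0:ℝ) < u := hu
      have h1 : (q * u) ^ i = q ^ i * u ^ i := mul_pow q u i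
      have h2 : (u : ℝ) ^ (i : ℕ) = u ^ ((i : ℕ) : ℝ) := (Real.rpow_natCast u i).symm
      have h3 : u ^ (z - 1) * u ^ ((i : ℕ) : ℝ) = u ^ (z + i - 1) := by
        rw [← Real.rpow_add hu0]; ring_nf
      simp only [hG_def, h1]
      rw [show u ^ (z-1) * Real.exp (-u) * (q ^ i * u ^ i / (Nat.factorial i : ℝ))
          = (q ^ i / (Nat.factorial i : ℝ)) * (Real.exp (-u) * (u ^ (z-1) * u ^ i)) by ring]
      rw [h2, h3]
    have hGint : ∀ i : ℕ, IntegrableOn (G i) (Ioi 0) := by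
      intro i
      apply IntegrableOn.congr_fun _ (fun u hu => (hGcongr i u hu).symm) measurableSet_Ioi
      exact (Real.GammaIntegral_convergent (by positivity : (0:ℝ) < z + i)).const_mul _
    have hGval : ∀ i : ℕ, ∫ u in Ioi (0:ℝ), G i u = a i * Real.Gamma z := by
      intro i
      rw [setIntegral_congr_fun measurableSet_Ioi (hGcongr i)]
      rw [MeasureTheory.integral_const_mul]
      have : ∫ u in Ioi (0:ℝ), Real.exp (-u) * u ^ (z + i - 1) = Real.Gamma (z + i) :=
        (Real.Gamma_eq_integral (by positivity)).symm
      rw [this, hGamma i, ha_def]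
      ring
    -- exchange sum and integral
    have hxchg : ∑' i, ∫ u in Ioi (0:ℝ), G i u = ∫ u in Ioi (0:ℝ), ∑' i, G i u := by
      apply MeasureTheory.integral_tsum_of_summable_integral_norm hGint
      have : ∀ i : ℕ, ∫ u in Ioi (0:ℝ), ‖G i u‖ = a i * Real.Gamma z := by
        intro i
        rw [← hGval i]
        apply setIntegral_congr_fun measurableSet_Ioi
        intro u hu
        have hu0 : (0:ℝ) < u := hu
        have : 0 ≤ G i u := by
          rw [hGcongr i u hu]
          have := Real.rpow_nonneg hu0.le (z + i - 1)
          positivity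
        simp [Real.norm_eq_abs, abs_of_nonneg this]
      rw [show (fun i : ℕ => ∫ u in Ioi (0:ℝ), ‖G i u‖) = fun i => a i * Real.Gamma z from
        funext this]
      exact hsum_a.mul_right _
    -- pointwise sum
    have hpt : ∀ u ∈ Ioi (0:ℝ), ∑' i, G i u = u ^ (z - 1) * Real.exp (-((1 - q) * u)) := by
      intro u hu
      have hexp : ∑' i : ℕ, (q * u) ^ i / (Nat.factorial i : ℝ) = Real.exp (q * u) := by
        rw [Real.exp_eq_exp_ℝ, NormedSpace.exp_eq_tsum_div]
      calc ∑' i, G i u = (u ^ (z-1) * Real.exp (-u)) * ∑' i, (q*u)^i / (Nat.factorial i : ℝ) := by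
            rw [← tsum_mul_left]
        _ = u ^ (z-1) * (Real.exp (-u) * Real.exp (q*u)) := by rw [hexp]; ring
        _ = u ^ (z-1) * Real.exp (-((1-q)*u)) := by rw [← Real.exp_add]; ring_nf
    -- value of the integral
    have hval : ∫ u in Ioi (0:ℝ), u ^ (z - 1) * Real.exp (-((1 - q) * u))
        = (1 / (1 - q)) ^ z * Real.Gamma z := Real.integral_rpow_mul_exp_neg_mul_Ioi hz h1q
    have htsum_a : ∑' i, a i = (1 - q) ^ (-z) := by
      have h1 : ∑' i, (a i * Real.Gamma z) = (1 / (1 - q)) ^ z * Real.Gamma z := by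
        calc ∑' i, (a i * Real.Gamma z) = ∑' i, ∫ u in Ioi (0:ℝ), G i u := by
              exact tsum_congr fun i => (hGval i).symm
          _ = ∫ u in Ioi (0:ℝ), ∑' i, G i u := hxchg
          _ = ∫ u in Ioi (0:ℝ), u ^ (z - 1) * Real.exp (-((1 - q) * u)) :=
              setIntegral_congr_fun measurableSet_Ioi hpt
          _ = (1 / (1 - q)) ^ z * Real.Gamma z := hval
      have hΓ : Real.Gamma z ≠ 0 := (Real.Gamma_pos_of_pos hz).ne'
      rw [tsum_mul_right] at h1
      have := mul_right_cancel₀ hΓ h1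
      rw [this, one_div, Real.inv_rpow h1q.le, ← Real.rpow_neg h1q.le]
    have hfun : (fun i : ℕ => risingFac x α i * t ^ i / (Nat.factorial i : ℝ)) = a := by
      funext i
      rw [ha_def]
      simp only
      rw [← hrf i]
    rw [hfun]
    have hgoal : ((1 - α * t) : ℝ) ^ (-(x / α)) = (1 - q) ^ (-z) := rfl
    rw [hgoal]
    exact (Summable.hasSum_iff hsum_a).mpr htsum_a

lemma szasz_integral (n i k : ℕ) (hn : 0 < n) :
    ∫ u in Ioi (0 : ℝ), szaszBasis n i u * u ^ k
      = (Nat.factorial (i + k) : ℝ) / (Nat.factorial i * (n : ℝ) ^ (k + 1)) := by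
  have hN : (0:ℝ) < n := by exact_mod_cast hn
  have hcongr : ∀ u ∈ Ioi (0:ℝ), szaszBasis n i u * u ^ k
      = ((n:ℝ) ^ i / (Nat.factorial i : ℝ)) * (u ^ (((i + k + 1):ℝ) - 1) * Real.exp (-((n:ℝ) * u))) := by
    intro u hu
    have hu0 : (0:ℝ) < u := hu
    unfold szaszBasis
    have h2 : u ^ (((i + k + 1):ℝ) - 1) = u ^ (i + k) := by
      rw [show (((i + k + 1):ℝ) - 1) = ((i + k : ℕ) : ℝ) by push_cast; ring,
        Real.rpow_natCast]
    rw [h2, mul_pow, pow_add]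
    ring
  rw [setIntegral_congr_fun measurableSet_Ioi hcongr, MeasureTheory.integral_const_mul,
    Real.integral_rpow_mul_exp_neg_mul_Ioi (by positivity) hN]
  rw [show ((i:ℝ) + k + 1) = (((i + k : ℕ) : ℝ) + 1) by push_cast; ring,
    Real.Gamma_nat_eq_factorial (i + k),
    show ((i + k : ℕ):ℝ) + 1 = ((i + k + 1 : ℕ):ℝ) by push_cast; ring,
    Real.rpow_natCast]
  have hfac : ((Nat.factorial i : ℝ)) ≠ 0 := by positivity
  have hn0 : (n:ℝ) ≠ 0 := hN.ne'
  field_simp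
  rw [one_div, inv_pow, show i + k + 1 = i + (k + 1) by ring, pow_add]
  field_simp

lemma szasz_integrable_pow (n i k : ℕ) (hn : 0 < n) :
    IntegrableOn (fun u : ℝ => szaszBasis n i u * u ^ k) (Ioi 0) := by
  have hN : (0:ℝ) < n := by exact_mod_cast hn
  have base : IntegrableOn (fun u : ℝ => u ^ (((i + k):ℕ):ℝ) * Real.exp (-(n:ℝ) * u ^ (1:ℝ)))
      (Ioi 0) :=
    integrableOn_rpow_mul_exp_neg_mul_rpow
      (lt_of_lt_of_le neg_one_lt_zero (Nat.cast_nonneg _)) one_pos hN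
  have : IntegrableOn (fun u : ℝ => ((n:ℝ) ^ i / (Nat.factorial i : ℝ)) *
      (u ^ (((i + k):ℕ):ℝ) * Real.exp (-(n:ℝ) * u ^ (1:ℝ)))) (Ioi 0) := base.const_mul _
  apply IntegrableOn.congr_fun this _ measurableSet_Ioi
  intro u hu
  have hu0 : (0:ℝ) < u := hu
  unfold szaszBasis
  simp only [Real.rpow_natCast, Real.rpow_one]
  rw [mul_pow, pow_add]
  ring

lemma szasz_nonneg {n i : ℕ} {u : ℝ} (hu : 0 ≤ u) (hn : 0 < n) : 0 ≤ szaszBasis n i u := by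
  unfold szaszBasis
  positivity

/-- Steklov-type smoothing. -/
lemma steklov (f : ℝ → ℝ) (hf : Continuous f) (δ : ℝ) (hδ : 0 < δ) (W : ℝ)
    (hW : ∀ z h : ℝ, 0 ≤ z → 0 ≤ h → h ≤ δ → |f (z + 2 * h) - 2 * f (z + h) + f z| ≤ W) :
    ∃ g g1 g2 : ℝ → ℝ, (∀ y, HasDerivAt g (g1 y) y) ∧ (∀ y, HasDerivAt g1 (g2 y) y) ∧
      (∀ y, 0 ≤ y → |f y - g y| ≤ W) ∧ (∀ y, 0 ≤ y → |g2 y| ≤ 9 * W / δ ^ 2) := by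
  have hW0 : 0 ≤ W := (abs_nonneg _).trans (hW 0 0 le_rfl le_rfl hδ.le)
  set F1 : ℝ → ℝ := fun y => ∫ s in (0:ℝ)..y, f s with hF1_def
  have hF1 : ∀ y, HasDerivAt F1 (f y) y := fun y => (hf.integral_hasStrictDerivAt 0 y).hasDerivAt
  have hF1c : Continuous F1 := continuous_iff_continuousAt.mpr fun y => (hF1 y).continuousAt
  set F2 : ℝ → ℝ := fun y => ∫ s in (0:ℝ)..y, F1 s with hF2_def
  have hF2 : ∀ y, HasDerivAt F2 (F1 y) y := fun y => (hF1c.integral_hasStrictDerivAt 0 y).hasDerivAt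
  refine ⟨fun y => (4/δ^2) * (2*(F2 (y+δ) - 2*F2 (y+δ/2) + F2 y)
      - (1/4)*(F2 (y+2*δ) - 2*F2 (y+δ) + F2 y)),
    fun y => (4/δ^2) * (2*(F1 (y+δ) - 2*F1 (y+δ/2) + F1 y)
      - (1/4)*(F1 (y+2*δ) - 2*F1 (y+δ) + F1 y)),
    fun y => (4/δ^2) * (2*(f (y+δ) - 2*f (y+δ/2) + f y)
      - (1/4)*(f (y+2*δ) - 2*f (y+δ) + f y)), ?_, ?_, ?_, ?_⟩
  · intro y
    have c1 : HasDerivAt (fun y : ℝ => F2 (y + δ)) (F1 (y + δ)) y := by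
      simpa [Function.comp_def] using (hF2 (y+δ)).comp y ((hasDerivAt_id y).add_const δ)
    have c2 : HasDerivAt (fun y : ℝ => F2 (y + δ/2)) (F1 (y + δ/2)) y := by
      simpa [Function.comp_def] using (hF2 (y+δ/2)).comp y ((hasDerivAt_id y).add_const (δ/2))
    have c3 : HasDerivAt (fun y : ℝ => F2 (y + 2*δ)) (F1 (y + 2*δ)) y := by
      simpa [Function.comp_def] using (hF2 (y+2*δ)).comp y ((hasDerivAt_id y).add_const (2*δ))
    exact ((((c1.sub (c2.const_mul 2)).add (hF2 y)).const_mul 2).sub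
      (((c3.sub (c1.const_mul 2)).add (hF2 y)).const_mul (1/4))).const_mul (4/δ^2)
  · intro y
    have c1 : HasDerivAt (fun y : ℝ => F1 (y + δ)) (f (y + δ)) y := by
      simpa [Function.comp_def] using (hF1 (y+δ)).comp y ((hasDerivAt_id y).add_const δ)
    have c2 : HasDerivAt (fun y : ℝ => F1 (y + δ/2)) (f (y + δ/2)) y := by
      simpa [Function.comp_def] using (hF1 (y+δ/2)).comp y ((hasDerivAt_id y).add_const (δ/2))
    have c3 : HasDerivAt (fun y : ℝ => F1 (y + 2*δ)) (f (y + 2*δ)) y := by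
      simpa [Function.comp_def] using (hF1 (y+2*δ)).comp y ((hasDerivAt_id y).add_const (2*δ))
    exact ((((c1.sub (c2.const_mul 2)).add (hF1 y)).const_mul 2).sub
      (((c3.sub (c1.const_mul 2)).add (hF1 y)).const_mul (1/4))).const_mul (4/δ^2)
  · -- |f y - g y| ≤ W
    intro y hy
    show |f y - (4/δ^2) * (2*(F2 (y+δ) - 2*F2 (y+δ/2) + F2 y)
      - (1/4)*(F2 (y+2*δ) - 2*F2 (y+δ) + F2 y))| ≤ W
    have hinner : ∀ t : ℝ, (∫ s in (0:ℝ)..(δ/2), (f y - 2*f (y+t+s) + f (y+2*t+2*s)))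
        = f y * (δ/2) - 2*F1 (y+t+δ/2) + (1/2)*F1 (y+2*t+δ)
          + 2*F1 (y+t) - (1/2)*F1 (y+2*t) := by
      intro t
      have heq := intervalIntegral.integral_eq_sub_of_hasDerivAt
        (f := fun s : ℝ => f y * s - 2*F1 (y+t+s) + (1/2)*F1 (y+2*t+2*s))
        (f' := fun s : ℝ => f y - 2*f (y+t+s) + f (y+2*t+2*s))
        (a := 0) (b := δ/2) ?_ ?_
      · rw [heq]
        rw [show y+2*t+2*(δ/2) = y+2*t+δ by ring]
        norm_num
        ring
      · intro s _
        have h1 : HasDerivAt (fun s : ℝ => F1 (y+t+s)) (f (y+t+s)) s := by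
          simpa [Function.comp_def] using (hF1 (y+t+s)).comp s ((hasDerivAt_id s).const_add (y+t))
        have h2 : HasDerivAt (fun s : ℝ => F1 (y+2*t+2*s)) (f (y+2*t+2*s) * 2) s := by
          have hlin : HasDerivAt (fun s : ℝ => y+2*t+2*s) 2 s := by
            simpa using ((hasDerivAt_id s).const_mul 2).const_add (y+2*t)
          exact (hF1 _).comp s hlin
        have h0 : HasDerivAt (fun s : ℝ => f y * s) (f y) s := by
          simpa using (hasDerivAt_id s).const_mul (f y)
        refine ((h0.sub (h1.const_mul 2)).add (h2.const_mul (1/2))).congr_deriv ?_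
        ring
      · exact Continuous.intervalIntegrable (by fun_prop) _ _
    have houter := intervalIntegral.integral_eq_sub_of_hasDerivAt
      (f := fun t : ℝ => f y * (δ/2) * t - 2*F2 (y+t+δ/2) + (1/4)*F2 (y+2*t+δ)
        + 2*F2 (y+t) - (1/4)*F2 (y+2*t))
      (f' := fun t : ℝ => f y * (δ/2) - 2*F1 (y+t+δ/2) + (1/2)*F1 (y+2*t+δ)
        + 2*F1 (y+t) - (1/2)*F1 (y+2*t))
      (a := 0) (b := δ/2) ?hd ?hi
    case hd =>
      intro t _
      have h0 : HasDerivAt (fun t : ℝ => f y * (δ/2) * t) (f y * (δ/2)) t := by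
        simpa using (hasDerivAt_id t).const_mul (f y * (δ/2))
      have h1 : HasDerivAt (fun t : ℝ => F2 (y+t+δ/2)) (F1 (y+t+δ/2)) t := by
        have hlin : HasDerivAt (fun t : ℝ => y+t+δ/2) 1 t := by
          simpa using ((hasDerivAt_id t).const_add y).add_const (δ/2)
        simpa [Function.comp_def] using (hF2 _).comp t hlin
      have h2 : HasDerivAt (fun t : ℝ => F2 (y+2*t+δ)) (F1 (y+2*t+δ) * 2) t := by
        have hlin : HasDerivAt (fun t : ℝ => y+2*t+δ) 2 t := by
          simpa using (((hasDerivAt_id t).const_mul 2).const_add y).add_const δ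
        exact (hF2 _).comp t hlin
      have h3 : HasDerivAt (fun t : ℝ => F2 (y+t)) (F1 (y+t)) t := by
        simpa [Function.comp_def] using (hF2 (y+t)).comp t ((hasDerivAt_id t).const_add y)
      have h4 : HasDerivAt (fun t : ℝ => F2 (y+2*t)) (F1 (y+2*t) * 2) t := by
        have hlin : HasDerivAt (fun t : ℝ => y+2*t) 2 t := by
          simpa using ((hasDerivAt_id t).const_mul 2).const_add y
        exact (hF2 _).comp t hlin
      refine ((((h0.sub (h1.const_mul 2)).add (h2.const_mul (1/4))).add
        (h3.const_mul 2)).sub (h4.const_mul (1/4))).congr_deriv ?_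
      ring
    case hi =>
      apply Continuous.intervalIntegrable
      fun_prop
    have key : f y - (4/δ^2) * (2*(F2 (y+δ) - 2*F2 (y+δ/2) + F2 y)
        - (1/4)*(F2 (y+2*δ) - 2*F2 (y+δ) + F2 y))
        = (4/δ^2) * ∫ t in (0:ℝ)..(δ/2),
            (∫ s in (0:ℝ)..(δ/2), (f y - 2*f (y+t+s) + f (y+2*t+2*s))) := by
      rw [intervalIntegral.integral_congr (g := fun t : ℝ => f y * (δ/2) - 2*F1 (y+t+δ/2)
          + (1/2)*F1 (y+2*t+δ) + 2*F1 (y+t) - (1/2)*F1 (y+2*t)) (fun t _ => hinner t)]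
      rw [houter]
      rw [show y+δ/2+δ/2 = y+δ by ring, show y+2*(δ/2)+δ = y+2*δ by ring,
        show y+2*(δ/2) = y+δ by ring, show y+0+δ/2 = y+δ/2 by ring,
        show y+2*0+δ = y+δ by ring, show y+2*0 = y by ring, show y+0 = y by ring]
      field_simp
      ring
    have hbound_inner : ∀ t ∈ Set.uIoc (0:ℝ) (δ/2),
        ‖∫ s in (0:ℝ)..(δ/2), (f y - 2*f (y+t+s) + f (y+2*t+2*s))‖ ≤ W * (δ/2) := by
      intro t ht
      rw [Set.uIoc_of_le (by positivity : (0:ℝ) ≤ δ/2)] at ht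
      have hb : ∀ s ∈ Set.uIoc (0:ℝ) (δ/2),
          ‖f y - 2*f (y+t+s) + f (y+2*t+2*s)‖ ≤ W := by
        intro s hs
        rw [Set.uIoc_of_le (by positivity : (0:ℝ) ≤ δ/2)] at hs
        have hWst := hW y (t+s) hy (by linarith [ht.1, hs.1]) (by linarith [ht.2, hs.2])
        rw [show y + 2*(t+s) = y+2*t+2*s by ring, show y + (t+s) = y+t+s by ring] at hWst
        rw [Real.norm_eq_abs, show f y - 2*f (y+t+s) + f (y+2*t+2*s)
          = f (y+2*t+2*s) - 2*f (y+t+s) + f y by ring]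
        exact hWst
      calc ‖∫ s in (0:ℝ)..(δ/2), (f y - 2*f (y+t+s) + f (y+2*t+2*s))‖
          ≤ W * |δ/2 - 0| := intervalIntegral.norm_integral_le_of_norm_le_const hb
        _ = W * (δ/2) := by rw [sub_zero, abs_of_pos (by positivity)]
    have hbound : ‖∫ t in (0:ℝ)..(δ/2),
        (∫ s in (0:ℝ)..(δ/2), (f y - 2*f (y+t+s) + f (y+2*t+2*s)))‖
        ≤ (W * (δ/2)) * (δ/2) := by
      calc ‖∫ t in (0:ℝ)..(δ/2), (∫ s in (0:ℝ)..(δ/2), (f y - 2*f (y+t+s) + f (y+2*t+2*s)))‖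
          ≤ (W * (δ/2)) * |δ/2 - 0| :=
            intervalIntegral.norm_integral_le_of_norm_le_const hbound_inner
        _ = (W * (δ/2)) * (δ/2) := by rw [sub_zero, abs_of_pos (by positivity)]
    calc |f y - (4/δ^2) * (2*(F2 (y+δ) - 2*F2 (y+δ/2) + F2 y)
        - (1/4)*(F2 (y+2*δ) - 2*F2 (y+δ) + F2 y))|
        = (4/δ^2) * ‖∫ t in (0:ℝ)..(δ/2),
            (∫ s in (0:ℝ)..(δ/2), (f y - 2*f (y+t+s) + f (y+2*t+2*s)))‖ := by
          rw [key, abs_mul, abs_of_nonneg (by positivity : (0:ℝ) ≤ 4/δ^2), Real.norm_eq_abs]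
      _ ≤ (4/δ^2) * ((W * (δ/2)) * (δ/2)) :=
          mul_le_mul_of_nonneg_left hbound (by positivity)
      _ = W := by field_simp; ring
  · -- second derivative bound
    intro y hy
    show |(4/δ^2) * (2*(f (y+δ) - 2*f (y+δ/2) + f y)
      - (1/4)*(f (y+2*δ) - 2*f (y+δ) + f y))| ≤ 9 * W / δ^2
    have h1 : |f (y+δ) - 2*f (y+δ/2) + f y| ≤ W := by
      have := hW y (δ/2) hy (by positivity) (by linarith)
      rw [show y + 2*(δ/2) = y + δ by ring] at this
      exact this
    have h2 : |f (y+2*δ) - 2*f (y+δ) + f y| ≤ W := hW y δ hy hδ.le le_rfl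
    have key : |(4/δ^2) * (2*(f (y+δ) - 2*f (y+δ/2) + f y)
        - (1/4)*(f (y+2*δ) - 2*f (y+δ) + f y))| ≤ (4/δ^2) * (2*W + (1/4)*W) := by
      rw [abs_mul, abs_of_nonneg (by positivity : (0:ℝ) ≤ 4/δ^2)]
      apply mul_le_mul_of_nonneg_left _ (by positivity : (0:ℝ) ≤ 4/δ^2)
      calc |2*(f (y+δ) - 2*f (y+δ/2) + f y) - (1/4)*(f (y+2*δ) - 2*f (y+δ) + f y)|
          ≤ |2*(f (y+δ) - 2*f (y+δ/2) + f y)| + |(1/4)*(f (y+2*δ) - 2*f (y+δ) + f y)| :=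
            abs_sub _ _
        _ ≤ 2*W + (1/4)*W := by
            rw [abs_mul, abs_mul, abs_of_nonneg (by norm_num : (0:ℝ) ≤ 2),
              abs_of_nonneg (by norm_num : (0:ℝ) ≤ 1/4)]
            gcongr
    calc |(4/δ^2) * (2*(f (y+δ) - 2*f (y+δ/2) + f y)
        - (1/4)*(f (y+2*δ) - 2*f (y+δ) + f y))| ≤ (4/δ^2) * (2*W + (1/4)*W) := key
      _ = 9 * W / δ^2 := by field_simp; ring

end Aux

open MeasureTheory Set Filter in
lemma Umain {n : ℕ} (hn : 0 < n) {α x : ℝ} (hα : 0 < α) (hx : 0 ≤ x) :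
    ∃ c : ℕ → ℝ, (∀ i, 0 ≤ c i) ∧
      (∀ f : ℝ → ℝ, U n α f x
        = (n : ℝ) * ∑' i, c i * ∫ u in Set.Ioi (0:ℝ), szaszBasis n i u * f u) ∧
      HasSum c 1 ∧ HasSum (fun i : ℕ => (i : ℝ) * c i) ((n : ℝ) * x) ∧
      Summable (fun i : ℕ => (i : ℝ) ^ 2 * c i) := by
  have hN : (0:ℝ) < n := by exact_mod_cast hn
  have hβ0 : (0:ℝ) < 1 + (n:ℝ) * α := by positivity
  have hp0 : (0:ℝ) < (α + 1/(n:ℝ))⁻¹ := by positivity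
  have hq1 : α * (α + 1/(n:ℝ))⁻¹ < 1 := by
    rw [← div_eq_mul_inv]
    exact (div_lt_one (by positivity)).mpr (lt_add_of_pos_right α (by positivity))
  have h2 : (1:ℝ) - α * (α + 1/(n:ℝ))⁻¹ = (1 + (n:ℝ)*α)⁻¹ := by
    rw [← div_eq_mul_inv]
    field_simp
    ring
  have hval : ∀ y : ℝ, ((1:ℝ) - α * (α + 1/(n:ℝ))⁻¹) ^ (-(y/α)) = (1 + (n:ℝ)*α) ^ (y/α) := by
    intro y
    rw [h2, Real.inv_rpow hβ0.le, Real.rpow_neg hβ0.le, inv_inv]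
  have hpβ : (α + 1/(n:ℝ))⁻¹ * (1 + (n:ℝ)*α) = (n:ℝ) := by
    rw [inv_mul_eq_div, div_eq_iff (by positivity)]
    field_simp
    ring
  have hA1 : (1 + (n:ℝ)*α) ^ (-x/α) * (1 + (n:ℝ)*α) ^ (x/α) = 1 := by
    rw [← Real.rpow_add hβ0, ← add_div, neg_add_cancel, zero_div, Real.rpow_zero]
  refine ⟨fun i => (1 + (n:ℝ)*α) ^ (-x/α) *
      (risingFac x α i * ((α + 1/(n:ℝ))⁻¹) ^ i / (Nat.factorial i : ℝ)),
    ?_, ?_, ?_, ?_, ?_⟩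
  · intro i
    have h1 := risingFac_nonneg hx hα.le i
    have h3 : (0:ℝ) < (1 + (n:ℝ)*α) ^ (-x/α) := Real.rpow_pos_of_pos hβ0 _
    positivity
  · intro f
    unfold U
    congr 1
    refine tsum_congr fun i => ?_
    rw [zpow_neg, zpow_natCast, ← inv_pow]
    ring
  · -- HasSum c 1
    have h1 := (genHasSum hα hx hp0.le hq1).mul_left ((1 + (n:ℝ)*α) ^ (-x/α))
    rw [hval x] at h1
    rwa [hA1] at h1
  · -- HasSum (i * c i) (n x)
    have h1 := (genHasSum (x := x + α) hα (by positivity) hp0.le hq1).mul_left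
      ((1 + (n:ℝ)*α) ^ (-x/α) * x * (α + 1/(n:ℝ))⁻¹)
    rw [hval (x + α)] at h1
    have hshape : (fun j => ((1 + (n:ℝ)*α) ^ (-x/α) * x * (α + 1/(n:ℝ))⁻¹) *
        (risingFac (x+α) α j * ((α + 1/(n:ℝ))⁻¹) ^ j / (Nat.factorial j : ℝ)))
        = (fun j : ℕ => ((j+1 : ℕ) : ℝ) * ((1 + (n:ℝ)*α) ^ (-x/α) *
          (risingFac x α (j+1) * ((α + 1/(n:ℝ))⁻¹) ^ (j+1) / (Nat.factorial (j+1) : ℝ)))) := by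
      funext j
      rw [risingFac_succ', Nat.factorial_succ, pow_succ]
      have hfj : ((Nat.factorial j : ℝ)) ≠ 0 := by positivity
      push_cast
      field_simp
    rw [hshape] at h1
    have h5 := (hasSum_nat_add_iff
      (f := fun i : ℕ => (i : ℝ) * ((1 + (n:ℝ)*α) ^ (-x/α) *
        (risingFac x α i * ((α + 1/(n:ℝ))⁻¹) ^ i / (Nat.factorial i : ℝ)))) 1).mp h1
    simp only [Finset.sum_range_one, Nat.cast_zero, zero_mul, add_zero] at h5
    have hexp : (x + α)/α = x/α + 1 := by rw [add_div, div_self hα.ne']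
    rw [hexp, Real.rpow_add hβ0, Real.rpow_one] at h5
    have hvalue : (1 + (n:ℝ)*α) ^ (-x/α) * x * (α + 1/(n:ℝ))⁻¹ *
        ((1 + (n:ℝ)*α) ^ (x/α) * (1 + (n:ℝ)*α)) = (n:ℝ) * x := by
      calc (1 + (n:ℝ)*α) ^ (-x/α) * x * (α + 1/(n:ℝ))⁻¹ *
          ((1 + (n:ℝ)*α) ^ (x/α) * (1 + (n:ℝ)*α))
          = ((1 + (n:ℝ)*α) ^ (-x/α) * (1 + (n:ℝ)*α) ^ (x/α)) *
            ((α + 1/(n:ℝ))⁻¹ * (1 + (n:ℝ)*α)) * x := by ring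
        _ = (n:ℝ) * x := by rw [hA1, hpβ, one_mul]
    rwa [hvalue] at h5
  · -- Summable (i^2 * c i)
    have hsum2 : Summable (fun i : ℕ => ((i:ℝ) * ((i:ℝ) - 1)) * ((1 + (n:ℝ)*α) ^ (-x/α) *
        (risingFac x α i * ((α + 1/(n:ℝ))⁻¹) ^ i / (Nat.factorial i : ℝ)))) := by
      rw [← summable_nat_add_iff 2]
      have h1 := ((genHasSum (x := x + α + α) hα (by positivity) hp0.le hq1).summable).mul_left
        ((1 + (n:ℝ)*α) ^ (-x/α) * (x * (x + α)) * ((α + 1/(n:ℝ))⁻¹)^2)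
      refine h1.congr fun j => ?_
      rw [show j + 2 = (j + 1) + 1 from rfl, risingFac_succ', risingFac_succ',
        Nat.factorial_succ, Nat.factorial_succ]
      have hfj : ((Nat.factorial j : ℝ)) ≠ 0 := by positivity
      push_cast
      generalize (α + 1/(n:ℝ))⁻¹ = p
      field_simp
      ring
    have hc1' : Summable (fun i : ℕ => (i:ℝ) * ((1 + (n:ℝ)*α) ^ (-x/α) *
        (risingFac x α i * ((α + 1/(n:ℝ))⁻¹) ^ i / (Nat.factorial i : ℝ)))) := by
      have h1 := (genHasSum (x := x + α) hα (by positivity) hp0.le hq1).summable.mul_left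
        ((1 + (n:ℝ)*α) ^ (-x/α) * x * (α + 1/(n:ℝ))⁻¹)
      rw [← summable_nat_add_iff 1]
      refine h1.congr fun j => ?_
      rw [risingFac_succ', Nat.factorial_succ, pow_succ]
      have hfj : ((Nat.factorial j : ℝ)) ≠ 0 := by positivity
      push_cast
      field_simp
    refine (hsum2.add hc1').congr fun i => ?_
    ring

lemma omega2_facts {f : ℝ → ℝ} {C : ℝ} (hC : ∀ t : ℝ, 0 ≤ t → |f t| ≤ C) {δ : ℝ} (hδ : 0 ≤ δ) :
    0 ≤ omega2 f δ ∧ ∀ z h : ℝ, 0 ≤ z → 0 ≤ h → h ≤ δ →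
      |f (z + 2 * h) - 2 * f (z + h) + f z| ≤ omega2 f δ := by
  have hbdd : BddAbove {y | ∃ x h : ℝ, 0 ≤ x ∧ 0 ≤ h ∧ h ≤ δ ∧
      y = |f (x + 2 * h) - 2 * f (x + h) + f x|} := by
    refine ⟨4 * C, ?_⟩
    rintro y ⟨z, h, hz, hh, hhδ, rfl⟩
    have h1 := hC (z + 2 * h) (by linarith)
    have h2 := hC (z + h) (by linarith)
    have h3 := hC z hz
    calc |f (z + 2*h) - 2*f (z+h) + f z| ≤ |f (z + 2*h) - 2*f (z+h)| + |f z| := abs_add_le _ _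
      _ ≤ |f (z + 2*h)| + |2 * f (z+h)| + |f z| := by
          have := abs_sub (f (z + 2*h)) (2 * f (z+h))
          linarith
      _ ≤ 4 * C := by rw [abs_mul, abs_two]; linarith
  constructor
  · refine le_csSup hbdd ⟨0, 0, le_rfl, le_rfl, hδ, ?_⟩
    rw [show (0:ℝ) + 2*0 = 0 by norm_num, show (0:ℝ) + 0 = 0 by norm_num,
      show f 0 - 2*f 0 + f 0 = 0 by ring, abs_zero]
  · intro z h hz hh hhδ
    exact le_csSup hbdd ⟨z, h, hz, hh, hhδ, rfl⟩

lemma omega1_facts {f : ℝ → ℝ} {C : ℝ} (hC : ∀ t : ℝ, 0 ≤ t → |f t| ≤ C) {δ : ℝ} (hδ : 0 ≤ δ) :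
    0 ≤ omega1 f δ ∧ ∀ z h : ℝ, 0 ≤ z → 0 ≤ h → h ≤ δ → |f (z + h) - f z| ≤ omega1 f δ := by
  have hbdd : BddAbove {y | ∃ x h : ℝ, 0 ≤ x ∧ 0 ≤ h ∧ h ≤ δ ∧ y = |f (x + h) - f x|} := by
    refine ⟨2 * C, ?_⟩
    rintro y ⟨z, h, hz, hh, hhδ, rfl⟩
    have h1 := hC (z + h) (by linarith)
    have h3 := hC z hz
    calc |f (z + h) - f z| ≤ |f (z + h)| + |f z| := abs_sub _ _
      _ ≤ 2 * C := by linarith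
  constructor
  · refine le_csSup hbdd ⟨0, 0, le_rfl, le_rfl, hδ, ?_⟩
    rw [show (0:ℝ) + 0 = 0 by norm_num, sub_self, abs_zero]
  · intro z h hz hh hhδ
    exact le_csSup hbdd ⟨z, h, hz, hh, hhδ, rfl⟩

set_option maxHeartbeats 2000000 in
open MeasureTheory Set Filter in
theorem stmt10 :
    ∃ M : ℝ, 0 < M ∧ ∀ f : ℝ → ℝ, ContinuousOn f (Set.Ici 0) →
      (∃ C : ℝ, ∀ t : ℝ, 0 ≤ t → |f t| ≤ C) →
      ∀ n : ℕ, 0 < n → ∀ α : ℝ, 0 < α → α ≤ 1 / n → ∀ x : ℝ, 0 ≤ x →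
        |U n α f x - f x| ≤
          M * omega2 f (Real.sqrt (theta n α 2 x + 1 / (n : ℝ) ^ 2)) +
            omega1 f (1 / n) := by
  refine ⟨13, by norm_num, ?_⟩
  intro f hf hCex n hn α hα hαn x hx
  obtain ⟨C, hC⟩ := hCex
  have hN : (0:ℝ) < n := by exact_mod_cast hn
  -- continuous bounded extension of f to ℝ
  set fe : ℝ → ℝ := fun y => f (max y 0) with hfe_def
  have hfe_cont : Continuous fe :=
    hf.comp_continuous (continuous_id.max continuous_const) (fun y => le_max_right y 0)
  have hfe_eq : ∀ y : ℝ, 0 ≤ y → fe y = f y := fun y hy => by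
    simp only [hfe_def, max_eq_left hy]
  obtain ⟨c, hc0, hUeq, hcs, hcs1, hcs2⟩ := Umain hn hα hx
  -- basic integral facts
  have hsz_cont : ∀ i : ℕ, Continuous (szaszBasis n i) := by
    intro i; unfold szaszBasis; fun_prop
  have hJ : ∀ i k : ℕ, IntegrableOn (fun u : ℝ => szaszBasis n i u * u ^ k) (Ioi 0) :=
    fun i k => szasz_integrable_pow n i k hn
  have hJ0 : ∀ i : ℕ, IntegrableOn (szaszBasis n i) (Ioi (0:ℝ)) := by
    intro i
    exact (hJ i 0).congr_fun (fun u _ => by simp) measurableSet_Ioi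
  have hJ1 : ∀ i : ℕ, IntegrableOn (fun u : ℝ => szaszBasis n i u * u) (Ioi (0:ℝ)) := by
    intro i
    exact (hJ i 1).congr_fun (fun u _ => by simp) measurableSet_Ioi
  have hI0 : ∀ i : ℕ, ∫ u in Ioi (0:ℝ), szaszBasis n i u = 1/(n:ℝ) := by
    intro i
    have hfac : ((Nat.factorial i : ℝ)) ≠ 0 := by positivity
    calc ∫ u in Ioi (0:ℝ), szaszBasis n i u
        = ∫ u in Ioi (0:ℝ), szaszBasis n i u * u ^ 0 := by simp
      _ = (Nat.factorial (i+0) : ℝ) / (Nat.factorial i * (n:ℝ) ^ (0+1)) := szasz_integral n i 0 hn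
      _ = 1/(n:ℝ) := by rw [Nat.add_zero]; rw [pow_one]; field_simp
  have hI1 : ∀ i : ℕ, ∫ u in Ioi (0:ℝ), szaszBasis n i u * u = ((i:ℝ)+1)/(n:ℝ)^2 := by
    intro i
    have hfac : ((Nat.factorial i : ℝ)) ≠ 0 := by positivity
    calc ∫ u in Ioi (0:ℝ), szaszBasis n i u * u
        = ∫ u in Ioi (0:ℝ), szaszBasis n i u * u ^ 1 := by simp
      _ = (Nat.factorial (i+1) : ℝ) / (Nat.factorial i * (n:ℝ) ^ (1+1)) := szasz_integral n i 1 hn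
      _ = ((i:ℝ)+1)/(n:ℝ)^2 := by
          rw [Nat.factorial_succ]
          push_cast
          field_simp
  have hI2 : ∀ i : ℕ, ∫ u in Ioi (0:ℝ), szaszBasis n i u * u ^ 2
      = ((i:ℝ)+1)*((i:ℝ)+2)/(n:ℝ)^3 := by
    intro i
    have hfac : ((Nat.factorial i : ℝ)) ≠ 0 := by positivity
    calc ∫ u in Ioi (0:ℝ), szaszBasis n i u * u ^ 2
        = (Nat.factorial (i+2) : ℝ) / (Nat.factorial i * (n:ℝ) ^ (2+1)) := szasz_integral n i 2 hn
      _ = ((i:ℝ)+1)*((i:ℝ)+2)/(n:ℝ)^3 := by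
          rw [show i+2 = (i+1)+1 from rfl, Nat.factorial_succ, Nat.factorial_succ]
          push_cast
          field_simp
          ring
  have hlinInt : ∀ i : ℕ, IntegrableOn (fun u : ℝ => szaszBasis n i u * (u - x)) (Ioi 0) := by
    intro i
    exact IntegrableOn.congr_fun ((hJ1 i).sub ((hJ0 i).const_mul x))
      (fun u _ => by simp only [Pi.sub_apply]; ring) measurableSet_Ioi
  have hsqInt : ∀ i : ℕ, IntegrableOn (fun u : ℝ => szaszBasis n i u * (u - x)^2) (Ioi 0) := by
    intro i
    exact IntegrableOn.congr_fun (((hJ i 2).sub ((hJ1 i).const_mul (2*x))).add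
      ((hJ0 i).const_mul (x^2)))
      (fun u _ => by simp only [Pi.sub_apply, Pi.add_apply]; ring) measurableSet_Ioi
  -- domination criterion
  have hdom : ∀ (i : ℕ) (w : ℝ → ℝ), Continuous w → ∀ a b d : ℝ,
      (∀ u : ℝ, 0 < u → |w u| ≤ a + b*u + d*u^2) →
      IntegrableOn (fun u : ℝ => szaszBasis n i u * w u) (Ioi 0) := by
    intro i w hw a b d hbd
    have hmaj : IntegrableOn (fun u : ℝ => |a| * (szaszBasis n i u * u^0)
        + (|b| * (szaszBasis n i u * u^1) + |d| * (szaszBasis n i u * u^2))) (Ioi 0) :=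
      ((hJ i 0).const_mul _).add (((hJ i 1).const_mul _).add ((hJ i 2).const_mul _))
    apply Integrable.mono hmaj ((hsz_cont i).mul hw).aestronglyMeasurable.restrict
    filter_upwards [ae_restrict_mem measurableSet_Ioi] with u hu
    have hu0 : (0:ℝ) < u := hu
    have hsz0 : 0 ≤ szaszBasis n i u := szasz_nonneg hu0.le hn
    have hrhs0 : 0 ≤ |a| * (szaszBasis n i u * u^0)
        + (|b| * (szaszBasis n i u * u^1) + |d| * (szaszBasis n i u * u^2)) := by
      have h1 : 0 ≤ szaszBasis n i u * u^0 := mul_nonneg hsz0 (by positivity)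
      have h2 : 0 ≤ szaszBasis n i u * u^1 := mul_nonneg hsz0 (by positivity)
      have h3 : 0 ≤ szaszBasis n i u * u^2 := mul_nonneg hsz0 (by positivity)
      exact add_nonneg (mul_nonneg (abs_nonneg a) h1)
        (add_nonneg (mul_nonneg (abs_nonneg b) h2) (mul_nonneg (abs_nonneg d) h3))
    rw [Real.norm_eq_abs, Real.norm_eq_abs, Pi.mul_apply, abs_mul, abs_of_nonneg hsz0, abs_of_nonneg hrhs0]
    have h1 : a + b*u + d*u^2 ≤ |a| + |b| * u + |d| * u^2 :=
      add_le_add (add_le_add (le_abs_self a)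
        (mul_le_mul_of_nonneg_right (le_abs_self b) hu0.le))
        (mul_le_mul_of_nonneg_right (le_abs_self d) (by positivity))
    calc szaszBasis n i u * |w u| ≤ szaszBasis n i u * (|a| + |b| * u + |d| * u^2) :=
          mul_le_mul_of_nonneg_left (le_trans (hbd u hu0) h1) hsz0
      _ = |a| * (szaszBasis n i u * u^0)
          + (|b| * (szaszBasis n i u * u^1) + |d| * (szaszBasis n i u * u^2)) := by ring
  -- theta nonneg and δ facts
  have hθ_eq : theta n α 2 x
      = (n:ℝ) * ∑' i, c i * ∫ u in Ioi (0:ℝ), szaszBasis n i u * (u - x)^2 := by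
    unfold theta
    exact hUeq _
  have hJnn : ∀ i : ℕ, 0 ≤ ∫ u in Ioi (0:ℝ), szaszBasis n i u * (u - x)^2 := by
    intro i
    exact setIntegral_nonneg measurableSet_Ioi fun u hu =>
      mul_nonneg (szasz_nonneg (le_of_lt hu) hn) (sq_nonneg _)
  have hθ0 : 0 ≤ theta n α 2 x := by
    rw [hθ_eq]
    exact mul_nonneg hN.le (tsum_nonneg fun i => mul_nonneg (hc0 i) (hJnn i))
  set δ := Real.sqrt (theta n α 2 x + 1/(n:ℝ)^2) with hδ_def
  have hδsq_pos : 0 < theta n α 2 x + 1/(n:ℝ)^2 :=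
    add_pos_of_nonneg_of_pos hθ0 (by positivity)
  have hδpos : 0 < δ := Real.sqrt_pos.mpr hδsq_pos
  have hδsq : δ^2 = theta n α 2 x + 1/(n:ℝ)^2 := Real.sq_sqrt hδsq_pos.le
  -- moduli
  obtain ⟨hW20, hW2⟩ := omega2_facts hC hδpos.le
  obtain ⟨hW10, hW1⟩ := omega1_facts hC (le_of_lt (by positivity : (0:ℝ) < 1/(n:ℝ)))
  set W2 := omega2 f δ with hW2_def
  set W1 := omega1 f (1/(n:ℝ)) with hW1_def
  have hW2fe : ∀ z h : ℝ, 0 ≤ z → 0 ≤ h → h ≤ δ →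
      |fe (z + 2 * h) - 2 * fe (z + h) + fe z| ≤ W2 := by
    intro z h hz hh hhδ
    rw [hfe_eq _ (by linarith), hfe_eq _ (by linarith), hfe_eq _ hz]
    exact hW2 z h hz hh hhδ
  -- Steklov smoothing
  obtain ⟨g, g1, g2, hg, hg1, hfg, hg2⟩ := steklov fe hfe_cont δ hδpos W2 hW2fe
  have hgc : Continuous g := continuous_iff_continuousAt.mpr fun y => (hg y).continuousAt
  have hg1c : Continuous g1 := continuous_iff_continuousAt.mpr fun y => (hg1 y).continuousAt
  set B := 9 * W2 / δ^2 with hB_def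
  have hB0 : 0 ≤ B := div_nonneg (by linarith) (sq_nonneg _)
  -- Lipschitz bound for g1 and Taylor bound
  have hg1lip : ∀ a b : ℝ, 0 ≤ a → 0 ≤ b → |g1 b - g1 a| ≤ B * |b - a| := by
    intro a b ha hb
    have hmem_a : a ∈ Icc (min a b) (max a b) := ⟨min_le_left _ _, le_max_left _ _⟩
    have hmem_b : b ∈ Icc (min a b) (max a b) := ⟨min_le_right _ _, le_max_right _ _⟩
    have key := Convex.norm_image_sub_le_of_norm_hasDerivWithin_le
      (f := g1) (f' := g2) (s := Icc (min a b) (max a b)) (C := B)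
      (fun y _ => (hg1 y).hasDerivWithinAt)
      (fun y hy => by
        rw [Real.norm_eq_abs]
        exact hg2 y (le_trans (le_min ha hb) hy.1))
      (convex_Icc _ _) hmem_a hmem_b
    rwa [Real.norm_eq_abs, Real.norm_eq_abs] at key
  have hTaylor : ∀ a b : ℝ, 0 ≤ a → 0 ≤ b → |g b - g a - g1 a * (b - a)| ≤ B * (b-a)^2 := by
    intro a b ha hb
    have hmem_a : a ∈ Icc (min a b) (max a b) := ⟨min_le_left _ _, le_max_left _ _⟩
    have hmem_b : b ∈ Icc (min a b) (max a b) := ⟨min_le_right _ _, le_max_right _ _⟩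
    have hderiv : ∀ y : ℝ, HasDerivAt (fun u => g u - g1 a * u) (g1 y - g1 a) y := by
      intro y
      simpa [Pi.sub_def] using (hg y).sub ((hasDerivAt_id y).const_mul (g1 a))
    have hd : max a b - min a b = |b - a| := by rw [max_sub_min_eq_abs, abs_sub_comm]
    have key := Convex.norm_image_sub_le_of_norm_hasDerivWithin_le
      (f := fun u => g u - g1 a * u) (f' := fun y => g1 y - g1 a)
      (s := Icc (min a b) (max a b)) (C := B * |b - a|)
      (fun y _ => (hderiv y).hasDerivWithinAt)
      (fun y hy => by
        rw [Real.norm_eq_abs]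
        have h0y : 0 ≤ y := le_trans (le_min ha hb) hy.1
        refine le_trans (hg1lip a y ha h0y) (mul_le_mul_of_nonneg_left ?_ hB0)
        rw [abs_sub_le_iff]
        constructor
        · linarith [hy.1, hy.2, hmem_a.1, hmem_a.2, hd, abs_nonneg (b-a)]
        · linarith [hy.1, hy.2, hmem_a.1, hmem_a.2, hd, abs_nonneg (b-a)])
      (convex_Icc _ _) hmem_a hmem_b
    rw [Real.norm_eq_abs, Real.norm_eq_abs] at key
    calc |g b - g a - g1 a * (b - a)|
        = |(g b - g1 a * b) - (g a - g1 a * a)| := by rw [show g b - g a - g1 a * (b-a)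
            = (g b - g1 a * b) - (g a - g1 a * a) by ring]
      _ ≤ B * |b - a| * |b - a| := key
      _ = B * (b - a)^2 := by rw [mul_assoc, ← sq_abs (b-a), sq]
  -- integrability of the pieces
  have hw1int : ∀ i : ℕ, IntegrableOn (fun u : ℝ => szaszBasis n i u * (fe u - g u)) (Ioi 0) := by
    intro i
    refine hdom i _ (hfe_cont.sub hgc) W2 0 0 (fun u hu => ?_)
    simpa using hfg u hu.le
  have hw2int : ∀ i : ℕ, IntegrableOn
      (fun u : ℝ => szaszBasis n i u * (g u - g x - g1 x * (u - x))) (Ioi 0) := by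
    intro i
    refine hdom i _ ((hgc.sub continuous_const).sub
      (continuous_const.mul (continuous_id.sub continuous_const))) (B*x^2) (2*B*x) B
      (fun u hu => ?_)
    have h1 := hTaylor x u hx hu.le
    have h2 : B*(u-x)^2 ≤ B*x^2 + 2*B*x*u + B*u^2 := by
      nlinarith [mul_nonneg (mul_nonneg hB0 hx) hu.le]
    linarith
  -- splitting of the integral
  have hIlin : ∀ i : ℕ, ∫ u in Ioi (0:ℝ), szaszBasis n i u * (u - x)
      = ((i:ℝ)+1)/(n:ℝ)^2 - x * (1/(n:ℝ)) := by
    intro i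
    rw [show (fun u : ℝ => szaszBasis n i u * (u - x))
      = fun u : ℝ => szaszBasis n i u * u - x * szaszBasis n i u from funext fun u => by ring]
    rw [integral_sub (hJ1 i) ((hJ0 i).const_mul x), integral_const_mul, hI1 i, hI0 i]
  have hIsplit : ∀ i : ℕ, ∫ u in Ioi (0:ℝ), szaszBasis n i u * fe u
      = (∫ u in Ioi (0:ℝ), szaszBasis n i u * (fe u - g u))
        + (∫ u in Ioi (0:ℝ), szaszBasis n i u * (g u - g x - g1 x * (u - x)))
        + (g x * (1/(n:ℝ)) + g1 x * (((i:ℝ)+1)/(n:ℝ)^2 - x * (1/(n:ℝ)))) := by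
    intro i
    have hrest : IntegrableOn (fun u : ℝ => g x * szaszBasis n i u
        + g1 x * (szaszBasis n i u * (u - x))) (Ioi 0) :=
      ((hJ0 i).const_mul (g x)).add ((hlinInt i).const_mul (g1 x))
    rw [show (fun u : ℝ => szaszBasis n i u * fe u)
      = fun u : ℝ => szaszBasis n i u * (fe u - g u)
        + (szaszBasis n i u * (g u - g x - g1 x * (u - x))
        + (g x * szaszBasis n i u + g1 x * (szaszBasis n i u * (u - x))))
      from funext fun u => by ring]
    have hrest2 : IntegrableOn (fun u : ℝ => szaszBasis n i u * (g u - g x - g1 x * (u - x))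
        + (g x * szaszBasis n i u + g1 x * (szaszBasis n i u * (u - x)))) (Ioi 0) :=
      (hw2int i).add hrest
    rw [integral_add (hw1int i) hrest2,
      integral_add (hw2int i) hrest,
      integral_add ((hJ0 i).const_mul (g x)) ((hlinInt i).const_mul (g1 x)),
      integral_const_mul, integral_const_mul, hI0 i, hIlin i]
    ring
  -- series bounds
  have hT1bd : ∀ i : ℕ, ‖c i * ∫ u in Ioi (0:ℝ), szaszBasis n i u * (fe u - g u)‖
      ≤ c i * (W2 * (1/(n:ℝ))) := by
    intro i
    rw [Real.norm_eq_abs, abs_mul, abs_of_nonneg (hc0 i)]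
    refine mul_le_mul_of_nonneg_left ?_ (hc0 i)
    have hb : ‖∫ u in Ioi (0:ℝ), szaszBasis n i u * (fe u - g u)‖
        ≤ ∫ u in Ioi (0:ℝ), W2 * szaszBasis n i u := by
      refine norm_integral_le_of_norm_le ((hJ0 i).const_mul W2) ?_
      filter_upwards [ae_restrict_mem measurableSet_Ioi] with u hu
      rw [Real.norm_eq_abs, abs_mul, abs_of_nonneg (szasz_nonneg (le_of_lt hu) hn), mul_comm]
      exact mul_le_mul_of_nonneg_right (hfg u (le_of_lt hu)) (szasz_nonneg (le_of_lt hu) hn)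
    rw [Real.norm_eq_abs] at hb
    calc |∫ u in Ioi (0:ℝ), szaszBasis n i u * (fe u - g u)|
        ≤ ∫ u in Ioi (0:ℝ), W2 * szaszBasis n i u := hb
      _ = W2 * (1/(n:ℝ)) := by rw [integral_const_mul, hI0 i]
  have hT2bd : ∀ i : ℕ, ‖c i * ∫ u in Ioi (0:ℝ), szaszBasis n i u * (g u - g x - g1 x * (u - x))‖
      ≤ c i * (B * ∫ u in Ioi (0:ℝ), szaszBasis n i u * (u - x)^2) := by
    intro i
    rw [Real.norm_eq_abs, abs_mul, abs_of_nonneg (hc0 i)]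
    refine mul_le_mul_of_nonneg_left ?_ (hc0 i)
    have hb : ‖∫ u in Ioi (0:ℝ), szaszBasis n i u * (g u - g x - g1 x * (u - x))‖
        ≤ ∫ u in Ioi (0:ℝ), B * (szaszBasis n i u * (u - x)^2) := by
      refine norm_integral_le_of_norm_le ((hsqInt i).const_mul B) ?_
      filter_upwards [ae_restrict_mem measurableSet_Ioi] with u hu
      have hsz0 : 0 ≤ szaszBasis n i u := szasz_nonneg (le_of_lt hu) hn
      rw [Real.norm_eq_abs, abs_mul, abs_of_nonneg hsz0]
      calc szaszBasis n i u * |g u - g x - g1 x * (u - x)|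
          ≤ szaszBasis n i u * (B * (u-x)^2) :=
            mul_le_mul_of_nonneg_left (hTaylor x u hx (le_of_lt hu)) hsz0
        _ = B * (szaszBasis n i u * (u - x)^2) := by ring
    rw [Real.norm_eq_abs] at hb
    calc |∫ u in Ioi (0:ℝ), szaszBasis n i u * (g u - g x - g1 x * (u - x))|
        ≤ ∫ u in Ioi (0:ℝ), B * (szaszBasis n i u * (u - x)^2) := hb
      _ = B * ∫ u in Ioi (0:ℝ), szaszBasis n i u * (u - x)^2 := by rw [integral_const_mul]
  -- summability of majorants
  have hmaj1 : HasSum (fun i => c i * (W2 * (1/(n:ℝ)))) (W2 * (1/(n:ℝ))) := by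
    simpa using hcs.mul_right (W2 * (1/(n:ℝ)))
  have hJval : ∀ i : ℕ, ∫ u in Ioi (0:ℝ), szaszBasis n i u * (u - x)^2
      = ((i:ℝ)+1)*((i:ℝ)+2)/(n:ℝ)^3 - 2*x*(((i:ℝ)+1)/(n:ℝ)^2) + x^2*(1/(n:ℝ)) := by
    intro i
    rw [show (fun u : ℝ => szaszBasis n i u * (u - x)^2)
      = fun u : ℝ => (szaszBasis n i u * u^2 - (2*x) * (szaszBasis n i u * u))
        + x^2 * szaszBasis n i u from funext fun u => by ring]
    have e1 : IntegrableOn (fun u : ℝ => szaszBasis n i u * u^2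
        - (2*x) * (szaszBasis n i u * u)) (Ioi 0) := (hJ i 2).sub ((hJ1 i).const_mul (2*x))
    rw [integral_add e1 ((hJ0 i).const_mul (x^2)),
      integral_sub (hJ i 2) ((hJ1 i).const_mul (2*x)),
      integral_const_mul, integral_const_mul, hI2 i, hI1 i, hI0 i]
  have hmaj2sum : Summable (fun i : ℕ =>
      c i * (B * ∫ u in Ioi (0:ℝ), szaszBasis n i u * (u - x)^2)) := by
    have heq : (fun i : ℕ => c i * (B * ∫ u in Ioi (0:ℝ), szaszBasis n i u * (u - x)^2))
        = fun i : ℕ => B*(1/(n:ℝ)^3) * ((i:ℝ)^2 * c i)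
          + (B*(3/(n:ℝ)^3 - 2*x/(n:ℝ)^2) * ((i:ℝ) * c i)
          + (B*(2/(n:ℝ)^3 - 2*x/(n:ℝ)^2 + x^2/(n:ℝ))) * c i) := by
      funext i
      rw [hJval i]
      ring
    rw [heq]
    exact (hcs2.mul_left _).add ((hcs1.summable.mul_left _).add (hcs.summable.mul_left _))
  have hsumT1 : Summable (fun i => c i * ∫ u in Ioi (0:ℝ), szaszBasis n i u * (fe u - g u)) :=
    Summable.of_norm_bounded hmaj1.summable hT1bd
  have hsumT2 : Summable (fun i => c i * ∫ u in Ioi (0:ℝ),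
      szaszBasis n i u * (g u - g x - g1 x * (u - x))) :=
    Summable.of_norm_bounded hmaj2sum hT2bd
  -- tsum bounds
  have habs1 : Summable (fun i => ‖c i * ∫ u in Ioi (0:ℝ), szaszBasis n i u * (fe u - g u)‖) :=
    Summable.of_nonneg_of_le (fun i => norm_nonneg _) hT1bd hmaj1.summable
  have htsumT1 : |∑' i, (c i * ∫ u in Ioi (0:ℝ), szaszBasis n i u * (fe u - g u))|
      ≤ W2 * (1/(n:ℝ)) := by
    calc |∑' i, (c i * ∫ u in Ioi (0:ℝ), szaszBasis n i u * (fe u - g u))|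
        ≤ ∑' i, ‖c i * ∫ u in Ioi (0:ℝ), szaszBasis n i u * (fe u - g u)‖ :=
          norm_tsum_le_tsum_norm habs1
      _ ≤ ∑' i, (c i * (W2 * (1/(n:ℝ)))) := Summable.tsum_le_tsum hT1bd habs1 hmaj1.summable
      _ = W2 * (1/(n:ℝ)) := hmaj1.tsum_eq
  have habs2 : Summable (fun i => ‖c i * ∫ u in Ioi (0:ℝ),
      szaszBasis n i u * (g u - g x - g1 x * (u - x))‖) :=
    Summable.of_nonneg_of_le (fun i => norm_nonneg _) hT2bd hmaj2sum
  have htsumT2 : |∑' i, (c i * ∫ u in Ioi (0:ℝ),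
      szaszBasis n i u * (g u - g x - g1 x * (u - x)))|
      ≤ B * (theta n α 2 x / (n:ℝ)) := by
    have hstep : ∑' i, (c i * (B * ∫ u in Ioi (0:ℝ), szaszBasis n i u * (u - x)^2))
        = B * (theta n α 2 x / (n:ℝ)) := by
      have h1 : ∑' i, (c i * (B * ∫ u in Ioi (0:ℝ), szaszBasis n i u * (u - x)^2))
          = B * ∑' i, (c i * ∫ u in Ioi (0:ℝ), szaszBasis n i u * (u - x)^2) := by
        rw [← tsum_mul_left]
        exact tsum_congr fun i => by ring
      rw [h1, hθ_eq]
      field_simp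
    calc |∑' i, (c i * ∫ u in Ioi (0:ℝ), szaszBasis n i u * (g u - g x - g1 x * (u - x)))|
        ≤ ∑' i, ‖c i * ∫ u in Ioi (0:ℝ), szaszBasis n i u * (g u - g x - g1 x * (u - x))‖ :=
          norm_tsum_le_tsum_norm habs2
      _ ≤ ∑' i, (c i * (B * ∫ u in Ioi (0:ℝ), szaszBasis n i u * (u - x)^2)) :=
          Summable.tsum_le_tsum hT2bd habs2 hmaj2sum
      _ = B * (theta n α 2 x / (n:ℝ)) := hstep
  -- tsums of constant and linear parts
  have hsT34 : HasSum (fun i : ℕ => c i * (g x * (1/(n:ℝ))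
      + g1 x * (((i:ℝ)+1)/(n:ℝ)^2 - x * (1/(n:ℝ)))))
      (g x * (1/(n:ℝ)) + g1 x * (1/(n:ℝ)^2)) := by
    have h1 : HasSum (fun i : ℕ => (g1 x/(n:ℝ)^2) * ((i:ℝ) * c i)
        + (g x * (1/(n:ℝ)) + g1 x * (1/(n:ℝ)^2 - x/(n:ℝ))) * c i)
        ((g1 x/(n:ℝ)^2) * ((n:ℝ)*x) + (g x * (1/(n:ℝ)) + g1 x * (1/(n:ℝ)^2 - x/(n:ℝ))) * 1) :=
      (hcs1.mul_left _).add (hcs.mul_left _)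
    have h2 : (g1 x/(n:ℝ)^2) * ((n:ℝ)*x)
        + (g x * (1/(n:ℝ)) + g1 x * (1/(n:ℝ)^2 - x/(n:ℝ))) * 1
        = g x * (1/(n:ℝ)) + g1 x * (1/(n:ℝ)^2) := by
      field_simp
      ring
    rw [h2] at h1
    have h3 : (fun i : ℕ => (g1 x/(n:ℝ)^2) * ((i:ℝ) * c i)
        + (g x * (1/(n:ℝ)) + g1 x * (1/(n:ℝ)^2 - x/(n:ℝ))) * c i)
        = fun i : ℕ => c i * (g x * (1/(n:ℝ))
          + g1 x * (((i:ℝ)+1)/(n:ℝ)^2 - x * (1/(n:ℝ)))) := by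
      funext i
      ring
    rwa [h3] at h1
  -- total tsum
  have htotal : ∑' i, (c i * ∫ u in Ioi (0:ℝ), szaszBasis n i u * fe u)
      = (∑' i, (c i * ∫ u in Ioi (0:ℝ), szaszBasis n i u * (fe u - g u)))
        + (∑' i, (c i * ∫ u in Ioi (0:ℝ), szaszBasis n i u * (g u - g x - g1 x * (u - x))))
        + (g x * (1/(n:ℝ)) + g1 x * (1/(n:ℝ)^2)) := by
    have heq : (fun i : ℕ => c i * ∫ u in Ioi (0:ℝ), szaszBasis n i u * fe u)
        = fun i : ℕ => ((c i * ∫ u in Ioi (0:ℝ), szaszBasis n i u * (fe u - g u))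
          + (c i * ∫ u in Ioi (0:ℝ), szaszBasis n i u * (g u - g x - g1 x * (u - x))))
          + (c i * (g x * (1/(n:ℝ)) + g1 x * (((i:ℝ)+1)/(n:ℝ)^2 - x * (1/(n:ℝ))))) := by
      funext i
      rw [hIsplit i]
      ring
    rw [heq, Summable.tsum_add (hsumT1.add hsumT2) hsT34.summable, Summable.tsum_add hsumT1 hsumT2,
      hsT34.tsum_eq]
  -- U in terms of fe
  have hUfe : U n α f x = (n:ℝ) * ∑' i, (c i * ∫ u in Ioi (0:ℝ), szaszBasis n i u * fe u) := by
    rw [hUeq f]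
    congr 1
    refine tsum_congr fun i => ?_
    congr 1
    refine setIntegral_congr_fun measurableSet_Ioi fun u hu => ?_
    rw [hfe_eq u (le_of_lt hu)]
  have hUdecomp : U n α f x - f x
      = (n:ℝ) * (∑' i, (c i * ∫ u in Ioi (0:ℝ), szaszBasis n i u * (fe u - g u)))
        + (n:ℝ) * (∑' i, (c i * ∫ u in Ioi (0:ℝ),
            szaszBasis n i u * (g u - g x - g1 x * (u - x))))
        + (g x - fe x) + g1 x * (1/(n:ℝ)) := by
    rw [hUfe, htotal, ← hfe_eq x hx]
    field_simp
    ring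
  -- bound on the derivative term
  have hg1x : |g1 x * (1/(n:ℝ))| ≤ B * (1/(n:ℝ))^2 + (W1 + 2 * W2) := by
    have hT := hTaylor x (x + 1/(n:ℝ)) hx (by positivity)
    rw [show x + 1/(n:ℝ) - x = 1/(n:ℝ) by ring] at hT
    have h1 : |fe (x + 1/(n:ℝ)) - fe x| ≤ W1 := by
      rw [hfe_eq _ (by positivity), hfe_eq _ hx]
      exact hW1 x (1/(n:ℝ)) hx (by positivity) le_rfl
    have h2 := hfg (x + 1/(n:ℝ)) (by positivity)
    have h3 := hfg x hx
    have hiden : g1 x * (1/(n:ℝ))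
        = -(g (x + 1/(n:ℝ)) - g x - g1 x * (1/(n:ℝ)))
          + (g (x + 1/(n:ℝ)) - fe (x + 1/(n:ℝ))) + (fe (x + 1/(n:ℝ)) - fe x)
          + (fe x - g x) := by ring
    rw [hiden]
    calc |(-(g (x + 1/(n:ℝ)) - g x - g1 x * (1/(n:ℝ)))
          + (g (x + 1/(n:ℝ)) - fe (x + 1/(n:ℝ))) + (fe (x + 1/(n:ℝ)) - fe x))
          + (fe x - g x)|
        ≤ |(-(g (x + 1/(n:ℝ)) - g x - g1 x * (1/(n:ℝ)))
          + (g (x + 1/(n:ℝ)) - fe (x + 1/(n:ℝ))) + (fe (x + 1/(n:ℝ)) - fe x))|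
          + |fe x - g x| := abs_add_le _ _
      _ ≤ |(-(g (x + 1/(n:ℝ)) - g x - g1 x * (1/(n:ℝ)))
          + (g (x + 1/(n:ℝ)) - fe (x + 1/(n:ℝ))))| + |fe (x + 1/(n:ℝ)) - fe x|
          + |fe x - g x| := by
          have := abs_add_le (-(g (x + 1/(n:ℝ)) - g x - g1 x * (1/(n:ℝ)))
            + (g (x + 1/(n:ℝ)) - fe (x + 1/(n:ℝ)))) (fe (x + 1/(n:ℝ)) - fe x)
          linarith
      _ ≤ |(-(g (x + 1/(n:ℝ)) - g x - g1 x * (1/(n:ℝ))))|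
          + |g (x + 1/(n:ℝ)) - fe (x + 1/(n:ℝ))| + |fe (x + 1/(n:ℝ)) - fe x|
          + |fe x - g x| := by
          have := abs_add_le (-(g (x + 1/(n:ℝ)) - g x - g1 x * (1/(n:ℝ))))
            (g (x + 1/(n:ℝ)) - fe (x + 1/(n:ℝ)))
          linarith
      _ ≤ B * (1/(n:ℝ))^2 + (W1 + 2 * W2) := by
          rw [abs_neg, abs_sub_comm (g (x + 1/(n:ℝ))) (fe (x + 1/(n:ℝ)))]
          linarith
  -- final assembly
  have hfinal1 : |(n:ℝ) * (∑' i, (c i * ∫ u in Ioi (0:ℝ), szaszBasis n i u * (fe u - g u)))|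
      ≤ W2 := by
    rw [abs_mul, abs_of_nonneg hN.le]
    calc (n:ℝ) * |∑' i, (c i * ∫ u in Ioi (0:ℝ), szaszBasis n i u * (fe u - g u))|
        ≤ (n:ℝ) * (W2 * (1/(n:ℝ))) := mul_le_mul_of_nonneg_left htsumT1 hN.le
      _ = W2 := by field_simp
  have hfinal2 : |(n:ℝ) * (∑' i, (c i * ∫ u in Ioi (0:ℝ),
      szaszBasis n i u * (g u - g x - g1 x * (u - x))))| ≤ B * theta n α 2 x := by
    rw [abs_mul, abs_of_nonneg hN.le]
    calc (n:ℝ) * |∑' i, (c i * ∫ u in Ioi (0:ℝ),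
        szaszBasis n i u * (g u - g x - g1 x * (u - x)))|
        ≤ (n:ℝ) * (B * (theta n α 2 x / (n:ℝ))) := mul_le_mul_of_nonneg_left htsumT2 hN.le
      _ = B * theta n α 2 x := by field_simp
  have hgfe : |g x - fe x| ≤ W2 := by rw [abs_sub_comm]; exact hfg x hx
  have hBδ : B * (theta n α 2 x + (1/(n:ℝ))^2) = 9 * W2 := by
    rw [hB_def, show (1/(n:ℝ))^2 = 1/(n:ℝ)^2 by rw [div_pow, one_pow], ← hδsq]
    field_simp
  calc |U n α f x - f x|
      = |(n:ℝ) * (∑' i, (c i * ∫ u in Ioi (0:ℝ), szaszBasis n i u * (fe u - g u)))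
        + (n:ℝ) * (∑' i, (c i * ∫ u in Ioi (0:ℝ),
            szaszBasis n i u * (g u - g x - g1 x * (u - x))))
        + (g x - fe x) + g1 x * (1/(n:ℝ))| := by rw [hUdecomp]
    _ ≤ |(n:ℝ) * (∑' i, (c i * ∫ u in Ioi (0:ℝ), szaszBasis n i u * (fe u - g u)))
        + (n:ℝ) * (∑' i, (c i * ∫ u in Ioi (0:ℝ),
            szaszBasis n i u * (g u - g x - g1 x * (u - x))))
        + (g x - fe x)| + |g1 x * (1/(n:ℝ))| := abs_add_le _ _
    _ ≤ |(n:ℝ) * (∑' i, (c i * ∫ u in Ioi (0:ℝ), szaszBasis n i u * (fe u - g u)))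
        + (n:ℝ) * (∑' i, (c i * ∫ u in Ioi (0:ℝ),
            szaszBasis n i u * (g u - g x - g1 x * (u - x))))|
        + |g x - fe x| + |g1 x * (1/(n:ℝ))| := by
        have := abs_add_le ((n:ℝ) * (∑' i, (c i * ∫ u in Ioi (0:ℝ),
            szaszBasis n i u * (fe u - g u)))
          + (n:ℝ) * (∑' i, (c i * ∫ u in Ioi (0:ℝ),
            szaszBasis n i u * (g u - g x - g1 x * (u - x)))))
          (g x - fe x)
        linarith
    _ ≤ |(n:ℝ) * (∑' i, (c i * ∫ u in Ioi (0:ℝ), szaszBasis n i u * (fe u - g u)))|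
        + |(n:ℝ) * (∑' i, (c i * ∫ u in Ioi (0:ℝ),
            szaszBasis n i u * (g u - g x - g1 x * (u - x))))|
        + |g x - fe x| + |g1 x * (1/(n:ℝ))| := by
        have := abs_add_le ((n:ℝ) * (∑' i, (c i * ∫ u in Ioi (0:ℝ),
            szaszBasis n i u * (fe u - g u))))
          ((n:ℝ) * (∑' i, (c i * ∫ u in Ioi (0:ℝ),
            szaszBasis n i u * (g u - g x - g1 x * (u - x)))))
        linarith
    _ ≤ W2 + B * theta n α 2 x + W2 + (B * (1/(n:ℝ))^2 + (W1 + 2 * W2)) := by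
        linarith [hfinal1, hfinal2, hgfe, hg1x]
    _ = 4 * W2 + B * (theta n α 2 x + (1/(n:ℝ))^2) + W1 := by ring
    _ = 13 * W2 + W1 := by rw [hBδ]; ring
end
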